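/- arXiv:2508.16797 — 6 statements merged into one kernel-verified Lean document; each statement's English description precedes it below -/
import Mathlib

section
/- Fix 0 < c < 1 and reals e, A, B, and define g : [0,1]² → ℝ by g(x,y) = e - A·v₁(x)v₁(y) + B·v₂(x)v₂(y), where v₁, v₂ are the orthogonal step functions associated with c. Then the degree function d(x) = ∫₀¹ g(x,y) dy is identically equal to e, and the triangle density τ(g) = ∫∫∫ g(x,y)g(y,z)g(z,x) equals e³ - c³(A³ - B³). -/
open MeasureTheory Set

lemma piece_int (a b k : ℝ) (hab : a ≤ b) (f : ℝ → ℝ)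
    (h : ∀ x ∈ Set.Ioo a b, f x = k) :
    IntervalIntegrable f volume a b ∧ (∫ x in a..b, f x) = (b - a) * k := by
  have hb : ∀ᵐ x : ℝ, x ≠ b := by
    have := Real.volume_singleton (a := b)
    simp [MeasureTheory.ae_iff, this]
  have hmem : ∀ᵐ x : ℝ, x ∈ Set.uIoc a b → f x = k := by
    filter_upwards [hb] with x hx hm
    rw [Set.uIoc_of_le hab] at hm
    exact h x ⟨hm.1, lt_of_le_of_ne hm.2 hx⟩
  constructor
  · refine (intervalIntegrable_const (c := k)).congr_ae ?_
    exact ((ae_restrict_iff' measurableSet_uIoc).mpr (hmem.mono fun x hx hm => (hx hm).symm))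
  · rw [intervalIntegral.integral_congr_ae hmem, intervalIntegral.integral_const, smul_eq_mul]

lemma tri_int (c : ℝ) (hc : 0 < c) (hc1 : c < 1) (f : ℝ → ℝ) (k₁ k₂ k₃ : ℝ)
    (h₁ : ∀ x ∈ Set.Ioo (0:ℝ) (c/2), f x = k₁)
    (h₂ : ∀ x ∈ Set.Ioo (c/2) c, f x = k₂)
    (h₃ : ∀ x ∈ Set.Ioo c 1, f x = k₃) :
    (∫ x in (0:ℝ)..1, f x) = c/2 * k₁ + c/2 * k₂ + (1-c) * k₃ := by
  obtain ⟨i₁, e₁⟩ := piece_int 0 (c/2) k₁ (by linarith) f h₁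
  obtain ⟨i₂, e₂⟩ := piece_int (c/2) c k₂ (by linarith) f h₂
  obtain ⟨i₃, e₃⟩ := piece_int c 1 k₃ (by linarith) f h₃
  rw [← intervalIntegral.integral_add_adjacent_intervals i₁ (i₂.trans i₃),
    ← intervalIntegral.integral_add_adjacent_intervals i₂ i₃, e₁, e₂, e₃]
  ring

set_option maxHeartbeats 1000000 in
theorem stmt_8 (c e A B : ℝ) (hc : 0 < c) (hc1 : c < 1)
    (v₁ v₂ : ℝ → ℝ)
    (hv₁ : ∀ x, v₁ x = if x < c / 2 then 1 else if x < c then -1 else 0)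
    (hv₂ : ∀ x, v₂ x = if x < c then Real.sqrt (1 - c) else -c / Real.sqrt (1 - c))
    (g : ℝ → ℝ → ℝ)
    (hg : ∀ x y, g x y = e - A * v₁ x * v₁ y + B * v₂ x * v₂ y) :
    (∀ x, (∫ y in (0 : ℝ)..1, g x y) = e) ∧
    (∫ x in (0 : ℝ)..1, ∫ y in (0 : ℝ)..1, ∫ z in (0 : ℝ)..1, g x y * g y z * g z x) =
      e ^ 3 - c ^ 3 * (A ^ 3 - B ^ 3) := by
  have hs0 : (0:ℝ) < Real.sqrt (1 - c) := Real.sqrt_pos.mpr (by linarith)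
  set s := Real.sqrt (1 - c) with hs_def
  have hs2 : s ^ 2 = 1 - c := Real.sq_sqrt (by linarith)
  have hhalf : c / 2 < c := by linarith
  have eval : ∀ F : ℝ → ℝ → ℝ, (∫ z in (0:ℝ)..1, F (v₁ z) (v₂ z))
      = c/2 * F 1 s + c/2 * F (-1) s + (1-c) * F 0 (-c/s) := by
    intro F
    apply tri_int c hc hc1
    · intro z hz
      have h2 : z < c := hz.2.trans hhalf
      simp only [hv₁ z, hv₂ z, if_pos hz.2, if_pos h2]
    · intro z hz
      have h1 : ¬ z < c/2 := not_lt.2 hz.1.le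
      simp only [hv₁ z, hv₂ z, if_neg h1, if_pos hz.2]
    · intro z hz
      have h1 : ¬ z < c/2 := not_lt.2 (by linarith [hz.1] : c/2 ≤ z)
      have h2 : ¬ z < c := not_lt.2 hz.1.le
      simp only [hv₁ z, hv₂ z, if_neg h1, if_neg h2]
  have key1 : (1-c) * (-c/s) = -(c*s) := by
    rw [← hs2]; field_simp
  constructor
  · intro x
    have h0 : (∫ y in (0:ℝ)..1, g x y)
        = ∫ y in (0:ℝ)..1, (fun p q => e - A * v₁ x * p + B * v₂ x * q) (v₁ y) (v₂ y) := by
      simp only [hg]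
    rw [h0, eval (fun p q => e - A * v₁ x * p + B * v₂ x * q)]
    show c/2 * (e - A * v₁ x * 1 + B * v₂ x * s) + c/2 * (e - A * v₁ x * (-1) + B * v₂ x * s)
      + (1-c) * (e - A * v₁ x * 0 + B * v₂ x * (-c/s)) = e
    linear_combination (B * v₂ x) * key1
  · have hin : ∀ x y, (∫ z in (0:ℝ)..1, g x y * g y z * g z x)
        = c/2 * (g x y * (e - A * v₁ y * 1 + B * v₂ y * s) * (e - A * 1 * v₁ x + B * s * v₂ x)) + c/2 * (g x y * (e - A * v₁ y * (-1) + B * v₂ y * s) * (e - A * (-1) * v₁ x + B * s * v₂ x)) + (1-c) * (g x y * (e - A * v₁ y * 0 + B * v₂ y * (-c/s)) * (e - A * 0 * v₁ x + B * (-c/s) * v₂ x)) := by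
      intro x y
      have h0 : (∫ z in (0:ℝ)..1, g x y * g y z * g z x)
          = ∫ z in (0:ℝ)..1, (fun p q => g x y * (e - A * v₁ y * p + B * v₂ y * q) * (e - A * p * v₁ x + B * q * v₂ x)) (v₁ z) (v₂ z) := by
        simp only [hg]
      rw [h0, eval (fun p q => g x y * (e - A * v₁ y * p + B * v₂ y * q) * (e - A * p * v₁ x + B * q * v₂ x))]
    have hmid : ∀ x, (∫ y in (0:ℝ)..1, c/2 * (g x y * (e - A * v₁ y * 1 + B * v₂ y * s) * (e - A * 1 * v₁ x + B * s * v₂ x)) + c/2 * (g x y * (e - A * v₁ y * (-1) + B * v₂ y * s) * (e - A * (-1) * v₁ x + B * s * v₂ x)) + (1-c) * (g x y * (e - A * v₁ y * 0 + B * v₂ y * (-c/s)) * (e - A * 0 * v₁ x + B * (-c/s) * v₂ x)))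
        = c/2 * (c/2 * ((e - A * v₁ x * 1 + B * v₂ x * s) * (e - A * 1 * 1 + B * s * s) * (e - A * 1 * v₁ x + B * s * v₂ x)) + c/2 * ((e - A * v₁ x * 1 + B * v₂ x * s) * (e - A * 1 * (-1) + B * s * s) * (e - A * (-1) * v₁ x + B * s * v₂ x)) + (1-c) * ((e - A * v₁ x * 1 + B * v₂ x * s) * (e - A * 1 * 0 + B * s * (-c/s)) * (e - A * 0 * v₁ x + B * (-c/s) * v₂ x))) + c/2 * (c/2 * ((e - A * v₁ x * (-1) + B * v₂ x * s) * (e - A * (-1) * 1 + B * s * s) * (e - A * 1 * v₁ x + B * s * v₂ x)) + c/2 * ((e - A * v₁ x * (-1) + B * v₂ x * s) * (e - A * (-1) * (-1) + B * s * s) * (e - A * (-1) * v₁ x + B * s * v₂ x)) + (1-c) * ((e - A * v₁ x * (-1) + B * v₂ x * s) * (e - A * (-1) * 0 + B * s * (-c/s)) * (e - A * 0 * v₁ x + B * (-c/s) * v₂ x))) + (1-c) * (c/2 * ((e - A * v₁ x * 0 + B * v₂ x * (-c/s)) * (e - A * 0 * 1 + B * (-c/s) * s) * (e - A * 1 * v₁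 x + B * s * v₂ x)) + c/2 * ((e - A * v₁ x * 0 + B * v₂ x * (-c/s)) * (e - A * 0 * (-1) + B * (-c/s) * s) * (e - A * (-1) * v₁ x + B * s * v₂ x)) + (1-c) * ((e - A * v₁ x * 0 + B * v₂ x * (-c/s)) * (e - A * 0 * 0 + B * (-c/s) * (-c/s)) * (e - A * 0 * v₁ x + B * (-c/s) * v₂ x))) := by
      intro x
      have h0 : (∫ y in (0:ℝ)..1, c/2 * (g x y * (e - A * v₁ y * 1 + B * v₂ y * s) * (e - A * 1 * v₁ x + B * s * v₂ x)) + c/2 * (g x y * (e - A * v₁ y * (-1) + B * v₂ y * s) * (e - A * (-1) * v₁ x + B * s * v₂ x)) + (1-c) * (g x y * (e - A * v₁ y * 0 + B * v₂ y * (-c/s)) * (e - A * 0 * v₁ x + B * (-c/s) * v₂ x)))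
          = ∫ y in (0:ℝ)..1, (fun p q => c/2 * ((e - A * v₁ x * p + B * v₂ x * q) * (e - A * p * 1 + B * q * s) * (e - A * 1 * v₁ x + B * s * v₂ x)) + c/2 * ((e - A * v₁ x * p + B * v₂ x * q) * (e - A * p * (-1) + B * q * s) * (e - A * (-1) * v₁ x + B * s * v₂ x)) + (1-c) * ((e - A * v₁ x * p + B * v₂ x * q) * (e - A * p * 0 + B * q * (-c/s)) * (e - A * 0 * v₁ x + B * (-c/s) * v₂ x))) (v₁ y) (v₂ y) := by
        simp only [hg]
      rw [h0, eval (fun p q => c/2 * ((e - A * v₁ x * p + B * v₂ x * q) * (e - A * p * 1 + B * q * s) * (e - A * 1 * v₁ x + B * s * v₂ x)) + c/2 * ((e - A * v₁ x * p + B * v₂ x * q) * (e - A * p * (-1) + B * q * s) * (e - A * (-1) * v₁ x + B * s * v₂ x)) + (1-c) * ((e - A * v₁ x * p + B * v₂ x * q) * (e - A * p * 0 + B * q * (-c/s)) * (e - A * 0 * v₁ x + B * (-c/s) * v₂ x)))]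
    simp only [hin, hmid]
    have h0 : (∫ x in (0:ℝ)..1, c/2 * (c/2 * ((e - A * v₁ x * 1 + B * v₂ x * s) * (e - A * 1 * 1 + B * s * s) * (e - A * 1 * v₁ x + B * s * v₂ x)) + c/2 * ((e - A * v₁ x * 1 + B * v₂ x * s) * (e - A * 1 * (-1) + B * s * s) * (e - A * (-1) * v₁ x + B * s * v₂ x)) + (1-c) * ((e - A * v₁ x * 1 + B * v₂ x * s) * (e - A * 1 * 0 + B * s * (-c/s)) * (e - A * 0 * v₁ x + B * (-c/s) * v₂ x))) + c/2 * (c/2 * ((e - A * v₁ x * (-1) + B * v₂ x * s) * (e - A * (-1) * 1 + B * s * s) * (e - A * 1 * v₁ x + B * s * v₂ x)) + c/2 * ((e - A * v₁ x * (-1) + B * v₂ x * s) * (e - A * (-1) * (-1) + B * s * s) * (e - A * (-1) * v₁ x + B * s * v₂ x)) + (1-c) * ((e - A * v₁ x * (-1) + B * v₂ x * s) * (e - A * (-1) * 0 + B * s * (-c/s)) * (e - A * 0 * v₁ x + B * (-c/s) * v₂ x))) + (1-c) * (c/2 * ((e - A * v₁ x * 0 + B * v₂ x * (-c/s)) * (e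 - A * 0 * 1 + B * (-c/s) * s) * (e - A * 1 * v₁ x + B * s * v₂ x)) + c/2 * ((e - A * v₁ x * 0 + B * v₂ x * (-c/s)) * (e - A * 0 * (-1) + B * (-c/s) * s) * (e - A * (-1) * v₁ x + B * s * v₂ x)) + (1-c) * ((e - A * v₁ x * 0 + B * v₂ x * (-c/s)) * (e - A * 0 * 0 + B * (-c/s) * (-c/s)) * (e - A * 0 * v₁ x + B * (-c/s) * v₂ x))))
        = ∫ x in (0:ℝ)..1, (fun p q => c/2 * (c/2 * ((e - A * p * 1 + B * q * s) * (e - A * 1 * 1 + B * s * s) * (e - A * 1 * p + B * s * q)) + c/2 * ((e - A * p * 1 + B * q * s) * (e - A * 1 * (-1) + B * s * s) * (e - A * (-1) * p + B * s * q)) + (1-c) * ((e - A * p * 1 + B * q * s) * (e - A * 1 * 0 + B * s * (-c/s)) * (e - A * 0 * p + B * (-c/s) * q))) + c/2 * (c/2 * ((e - A * p * (-1) + B * q * s) * (e - A * (-1) * 1 + B * s * s) * (e - A * 1 * p + B * s * q)) + c/2 * ((e - A * p * (-1) + B * q * s) * (e - A * (-1) * (-1) + B * s * s) * (e - A * (-1)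 * p + B * s * q)) + (1-c) * ((e - A * p * (-1) + B * q * s) * (e - A * (-1) * 0 + B * s * (-c/s)) * (e - A * 0 * p + B * (-c/s) * q))) + (1-c) * (c/2 * ((e - A * p * 0 + B * q * (-c/s)) * (e - A * 0 * 1 + B * (-c/s) * s) * (e - A * 1 * p + B * s * q)) + c/2 * ((e - A * p * 0 + B * q * (-c/s)) * (e - A * 0 * (-1) + B * (-c/s) * s) * (e - A * (-1) * p + B * s * q)) + (1-c) * ((e - A * p * 0 + B * q * (-c/s)) * (e - A * 0 * 0 + B * (-c/s) * (-c/s)) * (e - A * 0 * p + B * (-c/s) * q)))) (v₁ x) (v₂ x) := rfl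
    rw [h0, eval (fun p q => c/2 * (c/2 * ((e - A * p * 1 + B * q * s) * (e - A * 1 * 1 + B * s * s) * (e - A * 1 * p + B * s * q)) + c/2 * ((e - A * p * 1 + B * q * s) * (e - A * 1 * (-1) + B * s * s) * (e - A * (-1) * p + B * s * q)) + (1-c) * ((e - A * p * 1 + B * q * s) * (e - A * 1 * 0 + B * s * (-c/s)) * (e - A * 0 * p + B * (-c/s) * q))) + c/2 * (c/2 * ((e - A * p * (-1) + B * q * s) * (e - A * (-1) * 1 + B * s * s) * (e - A * 1 * p + B * s * q)) + c/2 * ((e - A * p * (-1) + B * q * s) * (e - A * (-1) * (-1) + B * s * s) * (e - A * (-1) * p + B * s * q)) + (1-c) * ((e - A * p * (-1) + B * q * s) * (e - A * (-1) * 0 + B * s * (-c/s)) * (e - A * 0 * p + B * (-c/s) * q))) + (1-c) * (c/2 * ((e - A * p * 0 + B * q * (-c/s)) * (e - A * 0 * 1 + B * (-c/s) * s) * (e - A * 1 * p + B * s * q)) + c/2 * ((e - A * p * 0 + B * q * (-c/s)) * (e - A * 0 * (-1) + B * (-c/s) * s) * (e - A * (-1) * p + B * s * q)) + (1-c) * ((e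 - A * p * 0 + B * q * (-c/s)) * (e - A * 0 * 0 + B * (-c/s) * (-c/s)) * (e - A * 0 * p + B * (-c/s) * q))))]
    have hsne : s ≠ 0 := ne_of_gt hs0
    have hsu : s * s⁻¹ = 1 := mul_inv_cancel₀ hsne
    linear_combination ((-3 : ℝ) * c^2 * e^2 * B * s^4 * s⁻¹^6 + (3 : ℝ) * c^2 * e^2 * B * s^6 * s⁻¹^6 + (1 : ℝ) * c^3 * B^3 * s^6 * s⁻¹^6 + (1 : ℝ) * c^3 * B^3 * s^8 * s⁻¹^6 + (1 : ℝ) * c^3 * B^3 * s^10 * s⁻¹^6 + (-3 : ℝ) * c^3 * e * B^2 * s^6 * s⁻¹^6 + (3 : ℝ) * c^3 * e * B^2 * s^8 * s⁻¹^6 + (3 : ℝ) * c^3 * e^2 * B * s^4 * s⁻¹^6 + (1 : ℝ) * c^4 * B^3 * s^6 * s⁻¹^6 + (-1 : ℝ) * c^4 * B^3 * s^8 * s⁻¹^6 + (-3 : ℝ) * c^4 * e * B^2 * s^2 * s⁻¹^6 + (3 : ℝ) * c^4 * e * B^2 * s^4 * s⁻¹^6 + (3 : ℝ) * c^4 * e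 * B^2 * s^6 * s⁻¹^6 + (-3 : ℝ) * c^5 * B^3 * s^4 * s⁻¹^6 + (-2 : ℝ) * c^5 * B^3 * s^6 * s⁻¹^6 + (6 : ℝ) * c^5 * e * B^2 * s^2 * s⁻¹^6 + (-3 : ℝ) * c^5 * e * B^2 * s^4 * s⁻¹^6 + (-1 : ℝ) * c^6 * B^3 * s⁻¹^6 + (-1 : ℝ) * c^6 * B^3 * s^2 * s⁻¹^6 + (2 : ℝ) * c^6 * B^3 * s^4 * s⁻¹^6 + (-3 : ℝ) * c^6 * e * B^2 * s^2 * s⁻¹^6 + (2 : ℝ) * c^7 * B^3 * s⁻¹^6 + (1 : ℝ) * c^7 * B^3 * s^2 * s⁻¹^6 + (-1 : ℝ) * c^8 * B^3 * s⁻¹^6) * hs2 + ((-3 : ℝ) * c^2 * e^2 * B * s⁻¹^2 + (6 : ℝ) * c^2 * e^2 * B * s * s⁻¹ + (-3 : ℝ) * c^2 * e^2 * B * s * s⁻¹^3 + (-3 : ℝ) * c^2 * e^2 * B * s^2 + (6 : ℝ) * c^2 * e^2 * B * s^2 * s⁻¹^2 + (-3 : ℝ) * c^2 * e^2 * B * s^2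 * s⁻¹^4 + (-3 : ℝ) * c^2 * e^2 * B * s^3 * s⁻¹ + (6 : ℝ) * c^2 * e^2 * B * s^3 * s⁻¹^3 + (-3 : ℝ) * c^2 * e^2 * B * s^3 * s⁻¹^5 + (-3 : ℝ) * c^2 * e^2 * B * s^4 * s⁻¹^2 + (6 : ℝ) * c^2 * e^2 * B * s^4 * s⁻¹^4 + (-3 : ℝ) * c^2 * e^2 * B * s^5 * s⁻¹^3 + (6 : ℝ) * c^2 * e^2 * B * s^5 * s⁻¹^5 + (-3 : ℝ) * c^2 * e^2 * B * s^6 * s⁻¹^4 + (-3 : ℝ) * c^2 * e^2 * B * s^7 * s⁻¹^5 + (1 : ℝ) * c^3 * B^3 + (1 : ℝ) * c^3 * B^3 * s * s⁻¹ + (1 : ℝ) * c^3 * B^3 * s^2 * s⁻¹^2 + (1 : ℝ) * c^3 * B^3 * s^3 * s⁻¹^3 + (1 : ℝ) * c^3 * B^3 * s^4 * s⁻¹^4 + (1 : ℝ) * c^3 * B^3 * s^5 * s⁻¹^5 + (-1 : ℝ) * c^3 * B^3 * s^6 + (-1 : ℝ) * c^3 * B^3 * s^7 * s⁻¹ + (-1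 : ℝ) * c^3 * B^3 * s^8 * s⁻¹^2 + (-1 : ℝ) * c^3 * B^3 * s^9 * s⁻¹^3 + (-1 : ℝ) * c^3 * B^3 * s^10 * s⁻¹^4 + (-1 : ℝ) * c^3 * B^3 * s^11 * s⁻¹^5 + (-3 : ℝ) * c^3 * e * B^2 * s^2 * s⁻¹^2 + (6 : ℝ) * c^3 * e * B^2 * s^3 * s⁻¹ + (-3 : ℝ) * c^3 * e * B^2 * s^3 * s⁻¹^3 + (-3 : ℝ) * c^3 * e * B^2 * s^4 + (6 : ℝ) * c^3 * e * B^2 * s^4 * s⁻¹^2 + (-3 : ℝ) * c^3 * e * B^2 * s^4 * s⁻¹^4 + (-3 : ℝ) * c^3 * e * B^2 * s^5 * s⁻¹ + (6 : ℝ) * c^3 * e * B^2 * s^5 * s⁻¹^3 + (-3 : ℝ) * c^3 * e * B^2 * s^5 * s⁻¹^5 + (-3 : ℝ) * c^3 * e * B^2 * s^6 * s⁻¹^2 + (6 : ℝ) * c^3 * e * B^2 * s^6 * s⁻¹^4 + (-3 : ℝ) * c^3 * e * B^2 * s^7 * s⁻¹^3 + (6 : ℝ) * c^3 * e * B^2 *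 s^7 * s⁻¹^5 + (-3 : ℝ) * c^3 * e * B^2 * s^8 * s⁻¹^4 + (-3 : ℝ) * c^3 * e * B^2 * s^9 * s⁻¹^5 + (6 : ℝ) * c^3 * e^2 * B * s⁻¹^2 + (-6 : ℝ) * c^3 * e^2 * B * s * s⁻¹ + (6 : ℝ) * c^3 * e^2 * B * s * s⁻¹^3 + (-6 : ℝ) * c^3 * e^2 * B * s^2 * s⁻¹^2 + (6 : ℝ) * c^3 * e^2 * B * s^2 * s⁻¹^4 + (-6 : ℝ) * c^3 * e^2 * B * s^3 * s⁻¹^3 + (6 : ℝ) * c^3 * e^2 * B * s^3 * s⁻¹^5 + (-6 : ℝ) * c^3 * e^2 * B * s^4 * s⁻¹^4 + (-6 : ℝ) * c^3 * e^2 * B * s^5 * s⁻¹^5 + (-3 : ℝ) * c^4 * B^3 * s^4 * s⁻¹^2 + (-3 : ℝ) * c^4 * B^3 * s^5 * s⁻¹^3 + (-3 : ℝ) * c^4 * B^3 * s^6 * s⁻¹^4 + (-3 : ℝ) * c^4 * B^3 * s^7 * s⁻¹^5 + (-3 : ℝ) * c^4 * e * B^2 * s⁻¹^4 + (6 : ℝ)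 * c^4 * e * B^2 * s * s⁻¹^3 + (-3 : ℝ) * c^4 * e * B^2 * s * s⁻¹^5 + (3 : ℝ) * c^4 * e * B^2 * s^2 * s⁻¹^2 + (6 : ℝ) * c^4 * e * B^2 * s^2 * s⁻¹^4 + (-6 : ℝ) * c^4 * e * B^2 * s^3 * s⁻¹ + (3 : ℝ) * c^4 * e * B^2 * s^3 * s⁻¹^3 + (6 : ℝ) * c^4 * e * B^2 * s^3 * s⁻¹^5 + (-6 : ℝ) * c^4 * e * B^2 * s^4 * s⁻¹^2 + (3 : ℝ) * c^4 * e * B^2 * s^4 * s⁻¹^4 + (-6 : ℝ) * c^4 * e * B^2 * s^5 * s⁻¹^3 + (3 : ℝ) * c^4 * e * B^2 * s^5 * s⁻¹^5 + (-6 : ℝ) * c^4 * e * B^2 * s^6 * s⁻¹^4 + (-6 : ℝ) * c^4 * e * B^2 * s^7 * s⁻¹^5 + (-3 : ℝ) * c^4 * e^2 * B * s⁻¹^2 + (-3 : ℝ) * c^4 * e^2 * B * s * s⁻¹^3 + (-3 : ℝ) * c^4 * e^2 * B * s^2 * s⁻¹^4 + (-3 : ℝ) * c^4 * e^2 * B *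 s^3 * s⁻¹^5 + (-3 : ℝ) * c^5 * B^3 * s^2 * s⁻¹^4 + (-3 : ℝ) * c^5 * B^3 * s^3 * s⁻¹^5 + (3 : ℝ) * c^5 * B^3 * s^4 * s⁻¹^2 + (3 : ℝ) * c^5 * B^3 * s^5 * s⁻¹^3 + (3 : ℝ) * c^5 * B^3 * s^6 * s⁻¹^4 + (3 : ℝ) * c^5 * B^3 * s^7 * s⁻¹^5 + (9 : ℝ) * c^5 * e * B^2 * s⁻¹^4 + (-12 : ℝ) * c^5 * e * B^2 * s * s⁻¹^3 + (9 : ℝ) * c^5 * e * B^2 * s * s⁻¹^5 + (-12 : ℝ) * c^5 * e * B^2 * s^2 * s⁻¹^4 + (-12 : ℝ) * c^5 * e * B^2 * s^3 * s⁻¹^5 + (6 : ℝ) * c^6 * B^3 * s^2 * s⁻¹^4 + (6 : ℝ) * c^6 * B^3 * s^3 * s⁻¹^5 + (-9 : ℝ) * c^6 * e * B^2 * s⁻¹^4 + (6 : ℝ) * c^6 * e * B^2 * s * s⁻¹^3 + (-9 : ℝ) * c^6 * e * B^2 * s * s⁻¹^5 + (6 : ℝ) * c^6 * e * B^2 * s^2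 * s⁻¹^4 + (6 : ℝ) * c^6 * e * B^2 * s^3 * s⁻¹^5 + (-3 : ℝ) * c^7 * B^3 * s^2 * s⁻¹^4 + (-3 : ℝ) * c^7 * B^3 * s^3 * s⁻¹^5 + (3 : ℝ) * c^7 * e * B^2 * s⁻¹^4 + (3 : ℝ) * c^7 * e * B^2 * s * s⁻¹^5) * hsu
end

section
/- Let Δ : [0,1]² → ℝ be a bounded symmetric measurable function with ∫₀¹ Δ(x,y) dx = 0 for almost every y. Then for any e ∈ ℝ, τ(e + Δ) = e³ + τ(Δ), where τ(f) = ∫∫∫ f(x,y)f(y,z)f(z,x). -/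
open MeasureTheory

lemma stmt10_aux_integrable {α : Type*} [MeasurableSpace α] {ν : MeasureTheory.Measure α}
    [MeasureTheory.IsFiniteMeasure ν] {f : α → ℝ}
    (hf : MeasureTheory.AEStronglyMeasurable f ν) {B : ℝ} (hB : ∀ z, |f z| ≤ B) :
    MeasureTheory.Integrable f ν :=
  ⟨hf, MeasureTheory.HasFiniteIntegral.of_bounded (C := B)
    (Filter.Eventually.of_forall (fun z => by simpa using hB z))⟩

theorem stmt_10 (Δ : ℝ → ℝ → ℝ) (e : ℝ)
    (hmeas : Measurable (Function.uncurry Δ))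
    (hsym : ∀ x y, Δ x y = Δ y x)
    (hbdd : ∃ C : ℝ, ∀ x y, |Δ x y| ≤ C)
    (hdeg : ∀ᵐ y ∂(MeasureTheory.volume.restrict (Set.Icc (0 : ℝ) 1)),
      (∫ x in (0 : ℝ)..1, Δ x y) = 0) :
    (∫ x in (0 : ℝ)..1, ∫ y in (0 : ℝ)..1, ∫ z in (0 : ℝ)..1,
        (e + Δ x y) * (e + Δ y z) * (e + Δ z x)) =
      e ^ 3 + (∫ x in (0 : ℝ)..1, ∫ y in (0 : ℝ)..1, ∫ z in (0 : ℝ)..1,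
        Δ x y * Δ y z * Δ z x) := by
  obtain ⟨C, hC⟩ := hbdd
  have hC0 : 0 ≤ C := le_trans (abs_nonneg _) (hC 0 0)
  simp only [intervalIntegral.integral_of_le zero_le_one]
  set μ : Measure ℝ := MeasureTheory.volume.restrict (Set.Ioc (0:ℝ) 1) with hμdef
  have hprob : IsProbabilityMeasure μ := ⟨by
    rw [hμdef, Measure.restrict_apply_univ, Real.volume_Ioc]; norm_num⟩
  have hrestr : MeasureTheory.volume.restrict (Set.Icc (0:ℝ) 1) = μ :=
    (Measure.restrict_congr_set MeasureTheory.Ioc_ae_eq_Icc).symm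
  -- measurability
  have hm1 : ∀ y, Measurable fun z => Δ y z := fun y => hmeas.of_uncurry_left
  have hm2 : ∀ x, Measurable fun z => Δ z x := fun x => hmeas.of_uncurry_right
  -- degree conditions
  have hdeg1 : ∀ᵐ x ∂μ, (∫ z, Δ z x ∂μ) = 0 := by
    rw [hrestr] at hdeg
    filter_upwards [hdeg] with x hx
    rw [← hx, intervalIntegral.integral_of_le zero_le_one]
  have hdeg2 : ∀ᵐ y ∂μ, (∫ z, Δ y z ∂μ) = 0 := by
    filter_upwards [hdeg1] with y hy
    rw [show (fun z => Δ y z) = fun z => Δ z y from funext fun z => hsym y z]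
    exact hy
  -- integrability of slices
  have ib : ∀ y, Integrable (fun z => Δ y z) μ := fun y =>
    stmt10_aux_integrable (hm1 y).aestronglyMeasurable (fun z => hC y z)
  have ic : ∀ x, Integrable (fun z => Δ z x) μ := fun x =>
    stmt10_aux_integrable (hm2 x).aestronglyMeasurable (fun z => hC z x)
  have ibc : ∀ x y, Integrable (fun z => Δ y z * Δ z x) μ := fun x y =>
    stmt10_aux_integrable ((hm1 y).mul (hm2 x)).aestronglyMeasurable
      (fun z => by rw [abs_mul]; exact mul_le_mul (hC _ _) (hC _ _) (abs_nonneg _) hC0)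
  -- the kernel K x y = ∫ z, Δ y z * Δ z x ∂μ
  have hK_meas : StronglyMeasurable fun p : ℝ × ℝ => ∫ z, Δ p.2 z * Δ z p.1 ∂μ := by
    exact MeasureTheory.StronglyMeasurable.integral_prod_right'
      (f := fun q : (ℝ × ℝ) × ℝ => Δ q.1.2 q.2 * Δ q.2 q.1.1)
      (((hmeas.comp ((measurable_fst.snd).prodMk measurable_snd)).mul
        (hmeas.comp (measurable_snd.prodMk measurable_fst.fst))).stronglyMeasurable)
  have hK_bdd : ∀ x y, |∫ z, Δ y z * Δ z x ∂μ| ≤ C * C := by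
    intro x y
    rw [← Real.norm_eq_abs]
    calc ‖∫ z, Δ y z * Δ z x ∂μ‖ ≤ C * C * (μ Set.univ).toReal := by
          apply MeasureTheory.norm_integral_le_of_norm_le_const
          exact Filter.Eventually.of_forall fun z => by
            simp only [Real.norm_eq_abs, abs_mul]
            exact mul_le_mul (hC _ _) (hC _ _) (abs_nonneg _) hC0
      _ = C * C := by simp [measure_univ]
  -- Fubini: ∫ y, K x y ∂μ = 0
  have hKzero : ∀ x, (∫ y, (∫ z, Δ y z * Δ z x ∂μ) ∂μ) = 0 := by
    intro x
    have hI : Integrable (Function.uncurry fun y z => Δ y z * Δ z x) (μ.prod μ) := by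
      apply stmt10_aux_integrable (B := C * C)
      · exact ((hmeas.comp (measurable_fst.prodMk measurable_snd)).mul
          (hmeas.comp (measurable_snd.prodMk measurable_const))).aestronglyMeasurable
      · intro p
        rw [Function.uncurry, abs_mul]
        exact mul_le_mul (hC _ _) (hC _ _) (abs_nonneg _) hC0
    rw [MeasureTheory.integral_integral_swap hI]
    have h0 : ∀ᵐ z ∂μ, (∫ y, Δ y z * Δ z x ∂μ) = 0 := by
      filter_upwards [hdeg1] with z hz
      rw [MeasureTheory.integral_mul_const, hz, zero_mul]
    rw [MeasureTheory.integral_congr_ae h0, integral_zero]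
  -- innermost integral
  have hA : ∀ x y, ∫ z, (e + Δ x y) * (e + Δ y z) * (e + Δ z x) ∂μ
      = (e + Δ x y) * (e * e + e * (∫ z, Δ z x ∂μ) + (∫ z, Δ y z ∂μ) * e
          + (∫ z, Δ y z * Δ z x ∂μ)) := by
    intro x y
    simp_rw [mul_assoc]
    rw [MeasureTheory.integral_const_mul]
    congr 1
    have hexp : (fun z => (e + Δ y z) * (e + Δ z x))
        = fun z => (e * e + e * Δ z x) + (Δ y z * e + Δ y z * Δ z x) := by
      funext z; ring
    have hg1 : Integrable (fun z => e * e + e * Δ z x) μ := by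
      apply stmt10_aux_integrable (B := |e * e| + |e| * C)
      · exact (measurable_const.add ((hm2 x).const_mul e)).aestronglyMeasurable
      · intro z
        refine (abs_add_le _ _).trans (add_le_add le_rfl ?_)
        rw [abs_mul]
        exact mul_le_mul_of_nonneg_left (hC _ _) (abs_nonneg e)
    have hg2 : Integrable (fun z => Δ y z * e + Δ y z * Δ z x) μ := by
      apply stmt10_aux_integrable (B := C * |e| + C * C)
      · exact (((hm1 y).mul_const e).add ((hm1 y).mul (hm2 x))).aestronglyMeasurable
      · intro z
        refine (abs_add_le _ _).trans (add_le_add ?_ ?_)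
        · rw [abs_mul]
          exact mul_le_mul_of_nonneg_right (hC _ _) (abs_nonneg e)
        · rw [abs_mul]
          exact mul_le_mul (hC _ _) (hC _ _) (abs_nonneg _) hC0
    rw [hexp, MeasureTheory.integral_add hg1 hg2,
      MeasureTheory.integral_add (integrable_const _) ((ic x).const_mul e),
      MeasureTheory.integral_add ((ib y).mul_const e) (ibc x y),
      MeasureTheory.integral_const, MeasureTheory.integral_const_mul,
      MeasureTheory.integral_mul_const]
    simp only [measure_univ, probReal_univ, ENNReal.toReal_one, smul_eq_mul, one_mul]
    ring
  -- per-x integrability of y ↦ K x y and y ↦ Δ x y * K x y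
  have hKy_meas : ∀ x, AEStronglyMeasurable (fun y => ∫ z, Δ y z * Δ z x ∂μ) μ := by
    intro x
    exact (hK_meas.comp_measurable (measurable_const.prodMk measurable_id)).aestronglyMeasurable
  have iK : ∀ x, Integrable (fun y => ∫ z, Δ y z * Δ z x ∂μ) μ := fun x =>
    stmt10_aux_integrable (hKy_meas x) (fun y => hK_bdd x y)
  have iDK : ∀ x, Integrable (fun y => Δ x y * (∫ z, Δ y z * Δ z x ∂μ)) μ := by
    intro x
    apply stmt10_aux_integrable (B := C * (C * C))
    · exact ((hm1 x).aestronglyMeasurable).mul (hKy_meas x)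
    · intro y
      rw [abs_mul]
      exact mul_le_mul (hC _ _) (hK_bdd x y) (abs_nonneg _) hC0
  -- middle integral
  have hB : ∀ x, ∫ y, (e + Δ x y) * (e * e + e * (∫ z, Δ z x ∂μ) + (∫ z, Δ y z ∂μ) * e
          + (∫ z, Δ y z * Δ z x ∂μ)) ∂μ
      = (e * e + e * (∫ z, Δ z x ∂μ)) * (e + (∫ y, Δ x y ∂μ))
          + ∫ y, Δ x y * (∫ z, Δ y z * Δ z x ∂μ) ∂μ := by
    intro x
    set J : ℝ := ∫ z, Δ z x ∂μ with hJ
    have hJb : |J| ≤ C := by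
      rw [hJ, ← Real.norm_eq_abs]
      calc ‖∫ z, Δ z x ∂μ‖ ≤ C * (μ Set.univ).toReal := by
            apply MeasureTheory.norm_integral_le_of_norm_le_const
            exact Filter.Eventually.of_forall fun z => by
              simpa using hC z x
        _ = C := by simp [measure_univ]
    have step1 : (fun y => (e + Δ x y) * (e * e + e * J + (∫ z, Δ y z ∂μ) * e
          + (∫ z, Δ y z * Δ z x ∂μ)))
        =ᵐ[μ] fun y => ((e * e + e * J) * e
            + ((e * e + e * J) * Δ x y
              + (e * (∫ z, Δ y z * Δ z x ∂μ) + Δ x y * (∫ z, Δ y z * Δ z x ∂μ)))) := by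
      filter_upwards [hdeg2] with y hy
      rw [hy]; ring
    have hg2 : Integrable (fun y => (e * e + e * J) * Δ x y
        + (e * (∫ z, Δ y z * Δ z x ∂μ) + Δ x y * (∫ z, Δ y z * Δ z x ∂μ))) μ := by
      apply stmt10_aux_integrable
        (B := |e * e + e * J| * C + (|e| * (C * C) + C * (C * C)))
      · exact (((hm1 x).aestronglyMeasurable.const_mul _).add
          (((hKy_meas x).const_mul e).add
            (((hm1 x).aestronglyMeasurable).mul (hKy_meas x))))
      · intro y
        refine (abs_add_le _ _).trans (add_le_add ?_ ((abs_add_le _ _).trans (add_le_add ?_ ?_)))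
        · rw [abs_mul]
          exact mul_le_mul_of_nonneg_left (hC _ _) (abs_nonneg _)
        · rw [abs_mul]
          exact mul_le_mul_of_nonneg_left (hK_bdd x y) (abs_nonneg e)
        · rw [abs_mul]
          exact mul_le_mul (hC _ _) (hK_bdd x y) (abs_nonneg _) hC0
    have hg3 : Integrable (fun y => e * (∫ z, Δ y z * Δ z x ∂μ)
        + Δ x y * (∫ z, Δ y z * Δ z x ∂μ)) μ := by
      apply stmt10_aux_integrable (B := |e| * (C * C) + C * (C * C))
      · exact (((hKy_meas x).const_mul e).add
          (((hm1 x).aestronglyMeasurable).mul (hKy_meas x)))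
      · intro y
        refine (abs_add_le _ _).trans (add_le_add ?_ ?_)
        · rw [abs_mul]
          exact mul_le_mul_of_nonneg_left (hK_bdd x y) (abs_nonneg e)
        · rw [abs_mul]
          exact mul_le_mul (hC _ _) (hK_bdd x y) (abs_nonneg _) hC0
    rw [MeasureTheory.integral_congr_ae step1,
      MeasureTheory.integral_add (integrable_const _) hg2,
      MeasureTheory.integral_add (((ib x).const_mul _)) hg3,
      MeasureTheory.integral_add ((iK x).const_mul e) (iDK x),
      MeasureTheory.integral_const, MeasureTheory.integral_const_mul,
      MeasureTheory.integral_const_mul, hKzero x]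
    simp [measure_univ]
    ring
  -- outer-level objects
  have hR_meas : AEStronglyMeasurable (fun x => ∫ y, Δ x y * (∫ z, Δ y z * Δ z x ∂μ) ∂μ) μ := by
    have h : StronglyMeasurable fun p : ℝ × ℝ => Δ p.1 p.2 * (∫ z, Δ p.2 z * Δ z p.1 ∂μ) :=
      hmeas.stronglyMeasurable.mul hK_meas
    exact (MeasureTheory.StronglyMeasurable.integral_prod_right'
      (f := fun p : ℝ × ℝ => Δ p.1 p.2 * (∫ z, Δ p.2 z * Δ z p.1 ∂μ)) h).aestronglyMeasurable
  have hR_bdd : ∀ x, |∫ y, Δ x y * (∫ z, Δ y z * Δ z x ∂μ) ∂μ| ≤ C * (C * C) := by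
    intro x
    rw [← Real.norm_eq_abs]
    calc ‖∫ y, Δ x y * (∫ z, Δ y z * Δ z x ∂μ) ∂μ‖ ≤ C * (C * C) * (μ Set.univ).toReal := by
          apply MeasureTheory.norm_integral_le_of_norm_le_const
          exact Filter.Eventually.of_forall fun y => by
            simp only [Real.norm_eq_abs, abs_mul]
            exact mul_le_mul (hC _ _) (hK_bdd x y) (abs_nonneg _) hC0
      _ = C * (C * C) := by simp [measure_univ]
  have iR : Integrable (fun x => ∫ y, Δ x y * (∫ z, Δ y z * Δ z x ∂μ) ∂μ) μ :=
    stmt10_aux_integrable hR_meas hR_bdd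
  -- putting it together: LHS
  have hLHS : (∫ x, ∫ y, ∫ z, (e + Δ x y) * (e + Δ y z) * (e + Δ z x) ∂μ ∂μ ∂μ)
      = e ^ 3 + ∫ x, (∫ y, Δ x y * (∫ z, Δ y z * Δ z x ∂μ) ∂μ) ∂μ := by
    have step : (fun x => ∫ y, ∫ z, (e + Δ x y) * (e + Δ y z) * (e + Δ z x) ∂μ ∂μ)
        =ᵐ[μ] fun x => e ^ 3 + ∫ y, Δ x y * (∫ z, Δ y z * Δ z x ∂μ) ∂μ := by
      filter_upwards [hdeg1, hdeg2] with x hx1 hx2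
      simp_rw [hA x]
      rw [hB x, hx1, hx2]
      ring
    rw [MeasureTheory.integral_congr_ae step,
      MeasureTheory.integral_add (integrable_const _) iR, MeasureTheory.integral_const]
    simp [measure_univ]
  -- RHS
  have hRHS : (∫ x, ∫ y, ∫ z, Δ x y * Δ y z * Δ z x ∂μ ∂μ ∂μ)
      = ∫ x, (∫ y, Δ x y * (∫ z, Δ y z * Δ z x ∂μ) ∂μ) ∂μ := by
    congr 1
    funext x
    congr 1
    funext y
    simp_rw [mul_assoc]
    rw [MeasureTheory.integral_const_mul]
  rw [hLHS, hRHS]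
end

section
/- Fix 0 < c < 1 and reals e, A, B, D, and define g(x,y) = e - A·v₁(x)v₁(y) + B·v₂(x)v₂(y) + (D/2)·√(1-c)·(v₂(x) + v₂(y)), with v₁, v₂ the orthogonal step functions associated with c. Then the degree function satisfies d(x) = e + (1-c)D/2 for x < c and d(x) = e - cD/2 for x ≥ c, the edge density is ε(g) = e, and the triangle density is τ(g) = e³ + (3/4)·e·c(1-c)·D² + (3/4)·c²(1-c)·B·D² + c³(B³ - A³). -/
open MeasureTheory

lemma constOn_intervalIntegral (p q : ℝ) (hpq : p ≤ q) (f : ℝ → ℝ) (a : ℝ)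
    (hf : ∀ x ∈ Set.Ioo p q, f x = a) :
    IntervalIntegrable f volume p q ∧ (∫ x in p..q, f x) = a * (q - p) := by
  have h2 : ∀ᵐ (x : ℝ) ∂volume, x ≠ q := by
    rw [ae_iff]
    simp [measure_singleton]
  have hae : f =ᵐ[volume.restrict (Set.Ioc p q)] fun _ => a :=
    ((ae_restrict_mem measurableSet_Ioc).and (ae_restrict_of_ae h2)).mono fun x hx =>
      hf x ⟨hx.1.1, lt_of_le_of_ne hx.1.2 hx.2⟩
  have hint : IntegrableOn f (Set.Ioc p q) volume :=
    (integrableOn_const (by simp [Real.volume_Ioc])).congr hae.symm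
  refine ⟨?_, ?_⟩
  · rw [intervalIntegrable_iff_integrableOn_Ioc_of_le hpq]; exact hint
  · rw [intervalIntegral.integral_of_le hpq, integral_congr_ae hae, setIntegral_const,
      Real.volume_real_Ioc_of_le hpq, smul_eq_mul, mul_comm]

lemma threePiece (c : ℝ) (hc : 0 < c) (hc1 : c < 1) (f : ℝ → ℝ) (a b d : ℝ)
    (h1 : ∀ x ∈ Set.Ioo (0:ℝ) (c/2), f x = a)
    (h2 : ∀ x ∈ Set.Ioo (c/2) c, f x = b)
    (h3 : ∀ x ∈ Set.Ioo c 1, f x = d) :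
    (∫ x in (0:ℝ)..1, f x) = a * (c/2) + b * (c/2) + d * (1-c) := by
  have H1 := constOn_intervalIntegral 0 (c/2) (by linarith) f a h1
  have H2 := constOn_intervalIntegral (c/2) c (by linarith) f b h2
  have H3 := constOn_intervalIntegral c 1 (by linarith) f d h3
  have e1 := intervalIntegral.integral_add_adjacent_intervals H1.1 H2.1
  have e2 := intervalIntegral.integral_add_adjacent_intervals (H1.1.trans H2.1) H3.1
  rw [← e2, ← e1, H1.2, H2.2, H3.2]; ring

set_option maxHeartbeats 2000000 in
theorem stmt_11 (c e A B D : ℝ) (hc : 0 < c) (hc1 : c < 1)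
    (v₁ v₂ : ℝ → ℝ)
    (hv₁ : ∀ x, v₁ x = if x < c / 2 then 1 else if x < c then -1 else 0)
    (hv₂ : ∀ x, v₂ x = if x < c then Real.sqrt (1 - c) else -c / Real.sqrt (1 - c))
    (g : ℝ → ℝ → ℝ)
    (hg : ∀ x y, g x y = e - A * v₁ x * v₁ y + B * v₂ x * v₂ y
      + (D / 2) * Real.sqrt (1 - c) * (v₂ x + v₂ y)) :
    (∀ x, x < c → (∫ y in (0 : ℝ)..1, g x y) = e + (1 - c) * D / 2) ∧
    (∀ x, c ≤ x → (∫ y in (0 : ℝ)..1, g x y) = e - c * D / 2) ∧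
    (∫ x in (0 : ℝ)..1, ∫ y in (0 : ℝ)..1, g x y) = e ∧
    (∫ x in (0 : ℝ)..1, ∫ y in (0 : ℝ)..1, ∫ z in (0 : ℝ)..1, g x y * g y z * g z x) =
      e ^ 3 + (3 / 4) * e * c * (1 - c) * D ^ 2 + (3 / 4) * c ^ 2 * (1 - c) * B * D ^ 2
        + c ^ 3 * (B ^ 3 - A ^ 3) := by
  set s := Real.sqrt (1 - c) with hsdef
  have hs : s ^ 2 = 1 - c := Real.sq_sqrt (by linarith)
  have hspos : 0 < s := Real.sqrt_pos.2 (by linarith)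
  have hs0 : s ≠ 0 := hspos.ne'
  have hcs : c = 1 - s ^ 2 := by linarith
  have hcc : c / 2 < c := by linarith
  -- values of v₁, v₂ on the three pieces
  have hv₁a : ∀ x ∈ Set.Ioo (0:ℝ) (c/2), v₁ x = 1 := fun x hx => by
    rw [hv₁ x, if_pos hx.2]
  have hv₁b : ∀ x ∈ Set.Ioo (c/2) c, v₁ x = -1 := fun x hx => by
    rw [hv₁ x, if_neg (not_lt.2 hx.1.le), if_pos hx.2]
  have hv₁c : ∀ x ∈ Set.Ioo c 1, v₁ x = 0 := fun x hx => by
    rw [hv₁ x, if_neg (not_lt.2 (hcc.le.trans hx.1.le)), if_neg (not_lt.2 hx.1.le)]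
  have hv₂a : ∀ x ∈ Set.Ioo (0:ℝ) (c/2), v₂ x = s := fun x hx => by
    rw [hv₂ x, if_pos (hx.2.trans hcc)]
  have hv₂b : ∀ x ∈ Set.Ioo (c/2) c, v₂ x = s := fun x hx => by
    rw [hv₂ x, if_pos hx.2]
  have hv₂c : ∀ x ∈ Set.Ioo c 1, v₂ x = -c/s := fun x hx => by
    rw [hv₂ x, if_neg (not_lt.2 hx.1.le)]
  -- values of g x · on the three pieces
  have hga : ∀ x, ∀ z ∈ Set.Ioo (0:ℝ) (c/2),
      g x z = e - A * v₁ x + B * s * v₂ x + D/2*s*(v₂ x + s) := fun x z hz => by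
    rw [hg, hv₁a z hz, hv₂a z hz]; ring
  have hgb : ∀ x, ∀ z ∈ Set.Ioo (c/2) c,
      g x z = e + A * v₁ x + B * s * v₂ x + D/2*s*(v₂ x + s) := fun x z hz => by
    rw [hg, hv₁b z hz, hv₂b z hz]; ring
  have hgc : ∀ x, ∀ z ∈ Set.Ioo c 1,
      g x z = e + B * (-c/s) * v₂ x + D/2*s*(v₂ x + (-c/s)) := fun x z hz => by
    rw [hg, hv₁c z hz, hv₂c z hz]; ring
  have gsymm : ∀ x y, g x y = g y x := fun x y => by rw [hg, hg]; ring
  -- degree function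
  have L1 : ∀ x, (∫ y in (0:ℝ)..1, g x y) = e + D/2*s*(v₂ x) := by
    intro x
    rw [threePiece c hc hc1 (fun y => g x y) _ _ _ (hga x) (hgb x) (hgc x)]
    rw [hcs]; field_simp; ring
  -- inner z-integral for the triangle density
  have L2 : ∀ x y, (∫ z in (0:ℝ)..1, g y z * g z x) =
      (e + D/2*s*(v₂ y)) * (e + D/2*s*(v₂ x)) + c*(A*(v₁ y))*(A*(v₁ x))
        + c*(B*(v₂ y) + D/2*s)*(B*(v₂ x) + D/2*s) := by
    intro x y
    rw [threePiece c hc hc1 (fun z => g y z * g z x)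
      ((e - A * v₁ y + B * s * v₂ y + D/2*s*(v₂ y + s)) * (e - A * v₁ x + B * s * v₂ x + D/2*s*(v₂ x + s)))
      ((e + A * v₁ y + B * s * v₂ y + D/2*s*(v₂ y + s)) * (e + A * v₁ x + B * s * v₂ x + D/2*s*(v₂ x + s)))
      ((e + B * (-c/s) * v₂ y + D/2*s*(v₂ y + (-c/s))) * (e + B * (-c/s) * v₂ x + D/2*s*(v₂ x + (-c/s))))
      (fun z hz => by show g y z * g z x = _; rw [gsymm z x, hga y z hz, hga x z hz])
      (fun z hz => by show g y z * g z x = _; rw [gsymm z x, hgb y z hz, hgb x z hz])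
      (fun z hz => by show g y z * g z x = _; rw [gsymm z x, hgc y z hz, hgc x z hz])]
    rw [hcs]; field_simp; ring
  -- y-integral for the triangle density
  have L3 : ∀ x, (∫ y in (0:ℝ)..1, g x y *
      ((e + D/2*s*(v₂ y)) * (e + D/2*s*(v₂ x)) + c*(A*(v₁ y))*(A*(v₁ x))
        + c*(B*(v₂ y) + D/2*s)*(B*(v₂ x) + D/2*s))) =
      e*(e + D/2*s*(v₂ x))^2 + c*D*s*(e + D/2*s*(v₂ x))*(B*(v₂ x) + D/2*s)
        - c^2*A^3*(v₁ x)^2 + c^2*B*(B*(v₂ x) + D/2*s)^2 := by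
    intro x
    rw [threePiece c hc hc1 _
      ((e - A * v₁ x + B * s * v₂ x + D/2*s*(v₂ x + s)) *
        ((e + D/2*s*s) * (e + D/2*s*(v₂ x)) + c*(A*1)*(A*(v₁ x))
          + c*(B*s + D/2*s)*(B*(v₂ x) + D/2*s)))
      ((e + A * v₁ x + B * s * v₂ x + D/2*s*(v₂ x + s)) *
        ((e + D/2*s*s) * (e + D/2*s*(v₂ x)) + c*(A*(-1))*(A*(v₁ x))
          + c*(B*s + D/2*s)*(B*(v₂ x) + D/2*s)))
      ((e + B * (-c/s) * v₂ x + D/2*s*(v₂ x + (-c/s))) *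
        ((e + D/2*s*(-c/s)) * (e + D/2*s*(v₂ x)) + c*(A*0)*(A*(v₁ x))
          + c*(B*(-c/s) + D/2*s)*(B*(v₂ x) + D/2*s)))
      (fun y hy => by rw [hga x y hy, hv₁a y hy, hv₂a y hy])
      (fun y hy => by rw [hgb x y hy, hv₁b y hy, hv₂b y hy])
      (fun y hy => by rw [hgc x y hy, hv₁c y hy, hv₂c y hy])]
    rw [hcs]; field_simp; ring
  refine ⟨fun x hx => ?_, fun x hx => ?_, ?_, ?_⟩
  · rw [L1 x, hv₂ x, if_pos hx, hcs]; ring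
  · rw [L1 x, hv₂ x, if_neg (not_lt.2 hx)]
    field_simp
    ring
  · simp only [L1]
    rw [threePiece c hc hc1 _ (e + D/2*s*s) (e + D/2*s*s) (e + D/2*s*(-c/s))
        (fun x hx => by rw [hv₂a x hx]) (fun x hx => by rw [hv₂b x hx])
        (fun x hx => by rw [hv₂c x hx])]
    rw [hcs]; field_simp; ring
  · simp only [mul_assoc]
    simp only [intervalIntegral.integral_const_mul]
    simp only [L2]
    simp only [L3]
    rw [threePiece c hc hc1 _
      (e*(e + D/2*s*s)^2 + c*D*s*(e + D/2*s*s)*(B*s + D/2*s)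
        - c^2*A^3*(1:ℝ)^2 + c^2*B*(B*s + D/2*s)^2)
      (e*(e + D/2*s*s)^2 + c*D*s*(e + D/2*s*s)*(B*s + D/2*s)
        - c^2*A^3*(-1:ℝ)^2 + c^2*B*(B*s + D/2*s)^2)
      (e*(e + D/2*s*(-c/s))^2 + c*D*s*(e + D/2*s*(-c/s))*(B*(-c/s) + D/2*s)
        - c^2*A^3*(0:ℝ)^2 + c^2*B*(B*(-c/s) + D/2*s)^2)
      (fun x hx => by rw [hv₁a x hx, hv₂a x hx])
      (fun x hx => by rw [hv₁b x hx, hv₂b x hx])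
      (fun x hx => by rw [hv₁c x hx, hv₂c x hx])]
    rw [hcs]; field_simp; ring
end

section
/- Fix e ∈ (0,1) and reals A, B with e+|A|+|B| < 1 and e-|A|-|B| > 0. For small c > 0 let S(c) = (c²/2)[H(e-A+B(1-c)) + H(e+A+B(1-c))] + 2c(1-c)H(e-cB) + (1-c)²·H(e + c²B/(1-c)). Then lim_{c→0⁺} (S(c) - H(e))/c² = (1/2)·[H(e+A+B) + H(e-A+B) - 2H(e) - 2B·H'(e)]. -/
/-- The binary entropy function. -/
noncomputable def binEntropy (u : ℝ) : ℝ := -(u * Real.log u + (1 - u) * Real.log (1 - u))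

lemma binEntropy_eq_mathlib : binEntropy = Real.binEntropy := by
  funext p
  simp only [binEntropy, Real.binEntropy, Real.log_inv]
  ring

theorem stmt_12 (e A B : ℝ) (he : e ∈ Set.Ioo (0 : ℝ) 1)
    (h1 : e + |A| + |B| < 1) (h2 : 0 < e - |A| - |B|) :
    Filter.Tendsto
      (fun c : ℝ =>
        ((c ^ 2 / 2) * (binEntropy (e - A + B * (1 - c)) + binEntropy (e + A + B * (1 - c)))
          + 2 * c * (1 - c) * binEntropy (e - c * B)
          + (1 - c) ^ 2 * binEntropy (e + c ^ 2 * B / (1 - c)) - binEntropy e) / c ^ 2)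
      (nhdsWithin 0 (Set.Ioi 0))
      (nhds ((1 / 2) * (binEntropy (e + A + B) + binEntropy (e - A + B) - 2 * binEntropy e
        - 2 * B * deriv binEntropy e))) := by
  obtain ⟨he0, he1⟩ := he
  set l := nhdsWithin (0:ℝ) (Set.Ioi 0) with hl
  set D := deriv binEntropy e with hD
  have hcont : Continuous binEntropy := by
    rw [binEntropy_eq_mathlib]; exact Real.binEntropy_continuous
  have hdiff : DifferentiableAt ℝ binEntropy e := by
    rw [binEntropy_eq_mathlib]
    exact Real.differentiableAt_binEntropy he0.ne' (by linarith)
  have hd : HasDerivAt binEntropy D e := hdiff.hasDerivAt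
  have hmem : ∀ᶠ c in l, c ∈ Set.Ioi (0:ℝ) := self_mem_nhdsWithin
  -- T1 : continuity part
  have hT1 : Filter.Tendsto
      (fun c : ℝ => (1/2) * (binEntropy (e - A + B * (1 - c)) + binEntropy (e + A + B * (1 - c))))
      l (nhds ((1/2) * (binEntropy (e - A + B) + binEntropy (e + A + B)))) := by
    have : ContinuousAt
        (fun c : ℝ => (1/2) * (binEntropy (e - A + B * (1 - c)) + binEntropy (e + A + B * (1 - c)))) 0 := by
      fun_prop
    have h := this.tendsto.mono_left (nhdsWithin_le_nhds : l ≤ nhds 0)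
    simpa using h
  -- T2 : slope part
  have hφ : HasDerivAt (fun c : ℝ => binEntropy (e - c * B)) (D * -B) 0 := by
    have hin : HasDerivAt (fun c : ℝ => e - c * B) (-B) 0 := (hasDerivAt_mul_const B).const_sub e
    have hd' : HasDerivAt binEntropy D (e - 0 * B) := by simpa using hd
    have hcomp := hd'.comp 0 hin; exact hcomp
  have hT2 : Filter.Tendsto (fun c : ℝ => (binEntropy (e - c * B) - binEntropy e) / c) l
      (nhds (D * -B)) := by
    have hs := hasDerivAt_iff_tendsto_slope.mp hφ
    have hs' := hs.mono_left (nhdsWithin_mono 0 (fun x hx => (Set.mem_Ioi.mp hx).ne' : Set.Ioi (0:ℝ) ⊆ {0}ᶜ))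
    refine hs'.congr' ?_
    filter_upwards [hmem] with c hc
    simp [slope_def_field]
  have hT2' : Filter.Tendsto (fun c : ℝ => 2 * (1 - c) * ((binEntropy (e - c * B) - binEntropy e) / c))
      l (nhds (2 * 1 * (D * -B))) := by
    apply Filter.Tendsto.mul _ hT2
    have : ContinuousAt (fun c : ℝ => 2 * (1 - c)) 0 := by fun_prop
    have h := this.tendsto.mono_left (nhdsWithin_le_nhds : l ≤ nhds 0)
    simpa using h
  -- T3 : second order part
  set g : ℝ → ℝ := fun c => e + c ^ 2 * B / (1 - c) with hg
  have hgc : ContinuousAt g 0 := by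
    apply ContinuousAt.add continuousAt_const
    exact ContinuousAt.div (by fun_prop) (by fun_prop) (by norm_num)
  have hgt : Filter.Tendsto g l (nhds e) := by
    have h := hgc.tendsto.mono_left (nhdsWithin_le_nhds : l ≤ nhds 0)
    simpa [hg] using h
  have hlo : (fun y => binEntropy y - binEntropy e - (y - e) * D) =o[nhds e] (fun y => y - e) := by
    have := hasDerivAt_iff_isLittleO.mp hd
    simpa [smul_eq_mul] using this
  have hloc : (fun c => binEntropy (g c) - binEntropy e - (g c - e) * D) =o[l] (fun c => g c - e) :=
    hlo.comp_tendsto hgt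
  have hB1 : Filter.Tendsto (fun c : ℝ => B / (1 - c)) l (nhds B) := by
    have : ContinuousAt (fun c : ℝ => B / (1 - c)) 0 :=
      ContinuousAt.div (by fun_prop) (by fun_prop) (by norm_num)
    have h := this.tendsto.mono_left (nhdsWithin_le_nhds : l ≤ nhds 0)
    simpa using h
  have hO : (fun c : ℝ => g c - e) =O[l] (fun c : ℝ => c ^ 2) := by
    have h1 : (fun c : ℝ => B / (1 - c)) =O[l] (fun _ => (1:ℝ)) := hB1.isBigO_one ℝ
    have h2 := (Asymptotics.isBigO_refl (fun c : ℝ => c ^ 2) l).mul h1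
    have h3 : (fun c : ℝ => g c - e) = fun c : ℝ => c ^ 2 * (B / (1 - c)) := by
      funext c; simp [hg]; ring
    rw [h3]
    simpa using h2
  have hr : (fun c => binEntropy (g c) - binEntropy e - (g c - e) * D) =o[l] (fun c : ℝ => c ^ 2) :=
    hloc.trans_isBigO hO
  have hr0 : Filter.Tendsto
      (fun c => (binEntropy (g c) - binEntropy e - (g c - e) * D) / c ^ 2) l (nhds 0) :=
    hr.tendsto_div_nhds_zero
  have hlin : Filter.Tendsto (fun c : ℝ => (g c - e) * D / c ^ 2) l (nhds (B * D)) := by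
    have h := hB1.mul_const D
    refine h.congr' ?_
    filter_upwards [hmem] with c hc
    have hc0 : (c:ℝ) ≠ 0 := (Set.mem_Ioi.mp hc).ne'
    show B / (1 - c) * D = (g c - e) * D / c ^ 2
    rw [show (g c - e) * D = c ^ 2 * (B / (1 - c) * D) from by simp only [hg]; ring,
      mul_div_cancel_left₀ _ (pow_ne_zero 2 hc0)]
  have hT3 : Filter.Tendsto (fun c : ℝ => (binEntropy (g c) - binEntropy e) / c ^ 2) l
      (nhds (0 + B * D)) := by
    have h := hr0.add hlin
    refine h.congr (fun c => ?_)
    ring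
  have hT3' : Filter.Tendsto
      (fun c : ℝ => (1 - c) ^ 2 * ((binEntropy (g c) - binEntropy e) / c ^ 2)) l
      (nhds (1 * (0 + B * D))) := by
    apply Filter.Tendsto.mul _ hT3
    have : ContinuousAt (fun c : ℝ => (1 - c) ^ 2) 0 := by fun_prop
    have h := this.tendsto.mono_left (nhdsWithin_le_nhds : l ≤ nhds 0)
    simpa using h
  -- combine
  have hG : Filter.Tendsto
      (fun c : ℝ =>
        (1/2) * (binEntropy (e - A + B * (1 - c)) + binEntropy (e + A + B * (1 - c)))
        + 2 * (1 - c) * ((binEntropy (e - c * B) - binEntropy e) / c)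
        + (1 - c) ^ 2 * ((binEntropy (g c) - binEntropy e) / c ^ 2)
        - binEntropy e) l
      (nhds ((1/2) * (binEntropy (e - A + B) + binEntropy (e + A + B))
        + 2 * 1 * (D * -B) + 1 * (0 + B * D) - binEntropy e)) :=
    ((hT1.add hT2').add hT3').sub tendsto_const_nhds
  have hlimeq : (1/2) * (binEntropy (e - A + B) + binEntropy (e + A + B))
        + 2 * 1 * (D * -B) + 1 * (0 + B * D) - binEntropy e
      = (1 / 2) * (binEntropy (e + A + B) + binEntropy (e - A + B) - 2 * binEntropy e
        - 2 * B * deriv binEntropy e) := by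
    rw [← hD]; ring
  rw [← hlimeq]
  refine hG.congr' ?_
  filter_upwards [hmem] with c hc
  have hc0 : (c:ℝ) ≠ 0 := (Set.mem_Ioi.mp hc).ne'
  simp only [hg]
  field_simp
  ring
end

section
/- Fix e ∈ (0,1) with e ≠ 1/2 and β ∈ ℝ, and let F(A,B) = [H(e+A+B) + H(e-A+B) - 2H(e) - 2B·H'(e)]/(A³-B³)^{2/3}. Then lim_{A→0⁺} (F(A, βA²) - H''(e))/A² = H''(e)·β² + H'''(e)·β + H''''(e)/12. -/
open Filter Set Topology

noncomputable def auxg1 (u : ℝ) : ℝ := Real.log (1 - u) - Real.log u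
noncomputable def auxg2 (u : ℝ) : ℝ := -(1 - u)⁻¹ - u⁻¹
noncomputable def auxg3 (u : ℝ) : ℝ := (u ^ 2)⁻¹ - ((1 - u) ^ 2)⁻¹
noncomputable def auxg4 (u : ℝ) : ℝ := -2 * (u ^ 3)⁻¹ - 2 * ((1 - u) ^ 3)⁻¹



lemma aux_hv (u : ℝ) : HasDerivAt (fun u : ℝ => 1 - u) (-1) u := by
  simpa [Pi.sub_def] using (hasDerivAt_const u (1:ℝ)).sub (hasDerivAt_id u)

lemma aux_hd0 {u : ℝ} (h0 : u ≠ 0) (h1 : (1:ℝ) - u ≠ 0) :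
    HasDerivAt binEntropy (auxg1 u) u := by
  have l1 : HasDerivAt (fun u : ℝ => Real.log u) u⁻¹ u := Real.hasDerivAt_log h0
  have l2 : HasDerivAt (fun u : ℝ => Real.log (1 - u)) (-(1 - u)⁻¹) u := by
    have h := (Real.hasDerivAt_log h1).comp u (aux_hv u)
    simpa [Function.comp_def] using h
  have l3 : HasDerivAt (fun u : ℝ => u * Real.log u) (Real.log u + 1) u := by
    have h := (hasDerivAt_id u).mul l1
    refine h.congr_deriv ?_
    field_simp
    simp only [id]
    ring
  have l4 : HasDerivAt (fun u : ℝ => (1 - u) * Real.log (1 - u)) (-Real.log (1 - u) - 1) u := by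
    have h := (aux_hv u).mul l2
    refine h.congr_deriv ?_
    field_simp
    ring
  have l5 := (l3.add l4).neg
  unfold binEntropy auxg1
  refine l5.congr_deriv ?_
  ring

lemma aux_hd1 {u : ℝ} (h0 : u ≠ 0) (h1 : (1:ℝ) - u ≠ 0) :
    HasDerivAt auxg1 (auxg2 u) u := by
  have l1 : HasDerivAt (fun u : ℝ => Real.log u) u⁻¹ u := Real.hasDerivAt_log h0
  have l2 : HasDerivAt (fun u : ℝ => Real.log (1 - u)) (-(1 - u)⁻¹) u := by
    simpa [Function.comp_def] using (Real.hasDerivAt_log h1).comp u (aux_hv u)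
  have h := l2.sub l1
  unfold auxg1 auxg2
  exact h

lemma aux_hd2 {u : ℝ} (h0 : u ≠ 0) (h1 : (1:ℝ) - u ≠ 0) :
    HasDerivAt auxg2 (auxg3 u) u := by
  have l1 : HasDerivAt (fun u : ℝ => u⁻¹) (-(u^2)⁻¹) u := hasDerivAt_inv h0
  have l2 : HasDerivAt (fun u : ℝ => (1 - u)⁻¹) (((1-u)^2)⁻¹) u := by
    have h := (aux_hv u).inv h1
    refine h.congr_deriv ?_
    field_simp
  have h := (l2.neg).sub l1
  unfold auxg2 auxg3
  refine h.congr_deriv ?_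
  ring

lemma aux_hd3 {u : ℝ} (h0 : u ≠ 0) (h1 : (1:ℝ) - u ≠ 0) :
    HasDerivAt auxg3 (auxg4 u) u := by
  have l1 : HasDerivAt (fun u : ℝ => (u^2)⁻¹) (-2 * (u^3)⁻¹) u := by
    have h := (hasDerivAt_pow 2 u).inv (pow_ne_zero 2 h0)
    refine h.congr_deriv ?_
    field_simp
    ring
  have l2 : HasDerivAt (fun u : ℝ => ((1-u)^2)⁻¹) (2 * ((1-u)^3)⁻¹) u := by
    have hp : HasDerivAt (fun u : ℝ => (1-u)^2) (2 * (1-u) * (-1)) u := by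
      simpa [Pi.pow_def] using (aux_hv u).pow 2
    have h := hp.inv (pow_ne_zero 2 h1)
    refine h.congr_deriv ?_
    field_simp
  have h := l1.sub l2
  unfold auxg3 auxg4
  exact h


lemma aux_step {x₀ : ℝ} {f g P p : ℝ → ℝ} {n : ℕ}
    (hfg : ∀ᶠ x in 𝓝 x₀, HasDerivAt f (g x) x)
    (hP : ∀ h, HasDerivAt P (p h) h)
    (hp0 : p 0 = g x₀) (hP0 : P 0 = 0)
    (hlim : Tendsto (fun h => (g (x₀ + h) - p h) / h ^ n) (𝓝[≠] (0:ℝ)) (𝓝 0)) :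
    Tendsto (fun h => (f (x₀ + h) - f x₀ - P h) / h ^ (n + 1)) (𝓝[≠] (0:ℝ)) (𝓝 0) := by
  rw [Metric.tendsto_nhdsWithin_nhds]
  intro ε hε
  obtain ⟨δ₁, hδ₁, hb⟩ := Metric.tendsto_nhdsWithin_nhds.mp hlim (ε/2) (by positivity)
  obtain ⟨δ₂, hδ₂, hball⟩ := Metric.eventually_nhds_iff_ball.mp hfg
  refine ⟨min δ₁ δ₂, lt_min hδ₁ hδ₂, ?_⟩
  intro h hh hd
  simp only [Real.dist_eq, sub_zero] at hd ⊢
  -- pointwise bound on g - p near 0, including 0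
  have key : ∀ t : ℝ, |t| ≤ |h| → |g (x₀ + t) - p t| ≤ ε/2 * |h| ^ n := by
    intro t ht
    rcases eq_or_ne t 0 with rfl | htne
    · simp [hp0]
      positivity
    · have h1 : dist t 0 < δ₁ := by
        rw [Real.dist_eq, sub_zero]
        exact lt_of_le_of_lt ht (lt_of_lt_of_le hd (min_le_left _ _))
      have := hb htne h1
      rw [Real.dist_eq, sub_zero, abs_div, abs_pow] at this
      have hpow : (0:ℝ) < |t| ^ n := by positivity
      rw [div_lt_iff₀ hpow] at this
      calc |g (x₀ + t) - p t| ≤ ε/2 * |t| ^ n := this.le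
        _ ≤ ε/2 * |h| ^ n := by
            gcongr
  -- MVT bound on uIcc 0 h
  have hmem : ∀ t ∈ uIcc (0:ℝ) h, |t| ≤ |h| := by
    intro t htm
    rw [Set.mem_uIcc] at htm
    have habs := abs_nonneg h
    have hb1 := le_abs_self h
    have hb2 := neg_abs_le h
    rcases htm with ⟨h1, h2⟩ | ⟨h1, h2⟩ <;> rw [abs_le] <;> constructor <;> linarith
  have hderiv : ∀ t ∈ uIcc (0:ℝ) h, HasDerivWithinAt (fun t => f (x₀ + t) - P t)
      (g (x₀ + t) - p t) (uIcc (0:ℝ) h) t := by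
    intro t htm
    have h1 : HasDerivAt (fun t => f (x₀ + t)) (g (x₀ + t)) t := by
      have hmemb : x₀ + t ∈ Metric.ball x₀ δ₂ := by
        rw [Metric.mem_ball, Real.dist_eq]
        have : |x₀ + t - x₀| = |t| := by ring_nf
        rw [this]
        exact lt_of_le_of_lt (hmem t htm) (lt_of_lt_of_le hd (min_le_right _ _))
      have h2 := (hball _ hmemb).comp t ((hasDerivAt_const t x₀).add (hasDerivAt_id t))
      simpa [Function.comp_def] using h2
    exact ((h1.sub (hP t))).hasDerivWithinAt
  have hbound : ∀ t ∈ uIcc (0:ℝ) h, ‖g (x₀ + t) - p t‖ ≤ ε/2 * |h| ^ n := by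
    intro t htm
    exact key t (hmem t htm)
  have hmvt := (convex_uIcc (0:ℝ) h).norm_image_sub_le_of_norm_hasDerivWithin_le
    hderiv hbound left_mem_uIcc right_mem_uIcc
  have hne : h ≠ 0 := hh
  have hpos : (0:ℝ) < |h| := abs_pos.mpr hne
  simp only [add_zero, hP0, sub_zero, Real.norm_eq_abs] at hmvt
  have hmvt' : |f (x₀ + h) - f x₀ - P h| ≤ ε / 2 * |h| ^ n * |h| := by
    have heq : f (x₀ + h) - f x₀ - P h = f (x₀ + h) - P h - f x₀ := by ring
    rw [heq]
    exact hmvt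
  rw [abs_div, abs_pow, div_lt_iff₀ (pow_pos hpos _)]
  calc |f (x₀ + h) - f x₀ - P h| ≤ ε / 2 * |h| ^ n * |h| := hmvt'
    _ = ε / 2 * |h| ^ (n + 1) := by ring
    _ < ε * |h| ^ (n + 1) := mul_lt_mul_of_pos_right (half_lt_self hε) (pow_pos hpos _)

lemma aux_hv' (u : ℝ) : HasDerivAt (fun u : ℝ => 1 - u) (-1) u := by
  simpa [Pi.sub_def] using (hasDerivAt_const u (1:ℝ)).sub (hasDerivAt_id u)

lemma aux_ne {u : ℝ} (hu : u ∈ Set.Ioo (0:ℝ) 1) : u ≠ 0 ∧ (1:ℝ) - u ≠ 0 :=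
  ⟨hu.1.ne', sub_ne_zero.mpr hu.2.ne'⟩

lemma aux_cont_g4 {e : ℝ} (he : e ∈ Set.Ioo (0:ℝ) 1) : ContinuousAt auxg4 e := by
  obtain ⟨h0, h1⟩ := aux_ne he
  unfold auxg4
  exact ((continuousAt_const.mul ((continuousAt_id.pow 3).inv₀ (pow_ne_zero 3 h0))).sub
    (continuousAt_const.mul (((continuousAt_const.sub continuousAt_id).pow 3).inv₀
      (pow_ne_zero 3 h1))))

/-- Order-4 Peano-type expansion of `binEntropy` at `e ∈ (0,1)`. -/
lemma aux_expansion {e : ℝ} (he : e ∈ Set.Ioo (0:ℝ) 1) :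
    Tendsto (fun h => (binEntropy (e + h) - binEntropy e - (auxg1 e * h + auxg2 e * h^2/2
      + auxg3 e * h^3/6 + auxg4 e * h^4/24)) / h ^ 4) (𝓝[≠] (0:ℝ)) (𝓝 0) := by
  have hmem : Set.Ioo (0:ℝ) 1 ∈ 𝓝 e := isOpen_Ioo.mem_nhds he
  obtain ⟨h0, h1⟩ := aux_ne he
  -- base : continuity of g4
  have hlim0 : Tendsto (fun h => (auxg4 (e + h) - auxg4 e) / h ^ 0) (𝓝[≠] (0:ℝ)) (𝓝 0) := by
    have ha : Tendsto (fun h : ℝ => e + h) (𝓝 0) (𝓝 e) :=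
      (continuous_add_left e).tendsto' 0 e (add_zero e)
    have hb := ((aux_cont_g4 he).tendsto.comp ha).sub_const (auxg4 e)
    rw [sub_self] at hb
    have hc := hb.mono_left (nhdsWithin_le_nhds (s := {(0:ℝ)}ᶜ))
    simpa only [pow_zero, div_one, Function.comp_def] using hc
  -- step 1
  have hlim1 := aux_step (x₀ := e) (f := auxg3) (g := auxg4) (P := fun h => auxg4 e * h)
    (p := fun _ => auxg4 e) (n := 0)
    (eventually_of_mem hmem (fun u hu => aux_hd3 (aux_ne hu).1 (aux_ne hu).2))
    (fun h => by simpa using (hasDerivAt_id h).const_mul (auxg4 e))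
    rfl (by simp) hlim0
  -- step 2
  have hP2 : ∀ h : ℝ, HasDerivAt (fun h => auxg3 e * h + auxg4 e * h^2/2)
      (auxg3 e + auxg4 e * h) h := by
    intro h
    have := ((hasDerivAt_id h).const_mul (auxg3 e)).add
      (((hasDerivAt_pow 2 h).const_mul (auxg4 e)).div_const 2)
    refine this.congr_deriv ?_
    push_cast
    ring
  have hlim2 := aux_step (x₀ := e) (f := auxg2) (g := auxg3)
    (P := fun h => auxg3 e * h + auxg4 e * h^2/2)
    (p := fun h => auxg3 e + auxg4 e * h) (n := 1)
    (eventually_of_mem hmem (fun u hu => aux_hd2 (aux_ne hu).1 (aux_ne hu).2))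
    hP2 (by simp) (by simp)
    (hlim1.congr (fun h => by ring))
  -- step 3
  have hP3 : ∀ h : ℝ, HasDerivAt (fun h => auxg2 e * h + auxg3 e * h^2/2 + auxg4 e * h^3/6)
      (auxg2 e + auxg3 e * h + auxg4 e * h^2/2) h := by
    intro h
    have := (((hasDerivAt_id h).const_mul (auxg2 e)).add
      (((hasDerivAt_pow 2 h).const_mul (auxg3 e)).div_const 2)).add
      (((hasDerivAt_pow 3 h).const_mul (auxg4 e)).div_const 6)
    refine this.congr_deriv ?_
    push_cast
    ring
  have hlim3 := aux_step (x₀ := e) (f := auxg1) (g := auxg2)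
    (P := fun h => auxg2 e * h + auxg3 e * h^2/2 + auxg4 e * h^3/6)
    (p := fun h => auxg2 e + auxg3 e * h + auxg4 e * h^2/2) (n := 2)
    (eventually_of_mem hmem (fun u hu => aux_hd1 (aux_ne hu).1 (aux_ne hu).2))
    hP3 (by simp) (by simp)
    (hlim2.congr (fun h => by ring))
  -- step 4
  have hP4 : ∀ h : ℝ, HasDerivAt
      (fun h => auxg1 e * h + auxg2 e * h^2/2 + auxg3 e * h^3/6 + auxg4 e * h^4/24)
      (auxg1 e + auxg2 e * h + auxg3 e * h^2/2 + auxg4 e * h^3/6) h := by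
    intro h
    have := ((((hasDerivAt_id h).const_mul (auxg1 e)).add
      (((hasDerivAt_pow 2 h).const_mul (auxg2 e)).div_const 2)).add
      (((hasDerivAt_pow 3 h).const_mul (auxg3 e)).div_const 6)).add
      (((hasDerivAt_pow 4 h).const_mul (auxg4 e)).div_const 24)
    refine this.congr_deriv ?_
    push_cast
    ring
  have hlim4 := aux_step (x₀ := e) (f := binEntropy) (g := auxg1)
    (P := fun h => auxg1 e * h + auxg2 e * h^2/2 + auxg3 e * h^3/6 + auxg4 e * h^4/24)
    (p := fun h => auxg1 e + auxg2 e * h + auxg3 e * h^2/2 + auxg4 e * h^3/6) (n := 3)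
    (eventually_of_mem hmem (fun u hu => aux_hd0 (aux_ne hu).1 (aux_ne hu).2))
    hP4 (by simp) (by simp)
    (hlim3.congr (fun h => by ring))
  exact hlim4

lemma aux_d1 : ∀ u ∈ Set.Ioo (0:ℝ) 1, deriv binEntropy u = auxg1 u :=
  fun u hu => (aux_hd0 (aux_ne hu).1 (aux_ne hu).2).deriv

lemma aux_d2 : ∀ u ∈ Set.Ioo (0:ℝ) 1, iteratedDeriv 2 binEntropy u = auxg2 u := by
  intro u hu
  rw [iteratedDeriv_succ, iteratedDeriv_one]
  have hev : deriv binEntropy =ᶠ[𝓝 u] auxg1 :=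
    eventually_of_mem (isOpen_Ioo.mem_nhds hu) aux_d1
  rw [hev.deriv_eq]
  exact (aux_hd1 (aux_ne hu).1 (aux_ne hu).2).deriv

lemma aux_d3 : ∀ u ∈ Set.Ioo (0:ℝ) 1, iteratedDeriv 3 binEntropy u = auxg3 u := by
  intro u hu
  rw [show (3:ℕ) = 2 + 1 from rfl, iteratedDeriv_succ]
  have hev : iteratedDeriv 2 binEntropy =ᶠ[𝓝 u] auxg2 :=
    eventually_of_mem (isOpen_Ioo.mem_nhds hu) aux_d2
  rw [hev.deriv_eq]
  exact (aux_hd2 (aux_ne hu).1 (aux_ne hu).2).deriv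

lemma aux_d4 : ∀ u ∈ Set.Ioo (0:ℝ) 1, iteratedDeriv 4 binEntropy u = auxg4 u := by
  intro u hu
  rw [show (4:ℕ) = 3 + 1 from rfl, iteratedDeriv_succ]
  have hev : iteratedDeriv 3 binEntropy =ᶠ[𝓝 u] auxg3 :=
    eventually_of_mem (isOpen_Ioo.mem_nhds hu) aux_d3
  rw [hev.deriv_eq]
  exact (aux_hd3 (aux_ne hu).1 (aux_ne hu).2).deriv

/-- the correction from the denominator is negligible -/
lemma aux_kappa (β : ℝ) :
    Tendsto (fun A : ℝ => (1 - (1 - β^3 * A^3) ^ ((2:ℝ)/3)) / A^2) (𝓝[>] (0:ℝ)) (𝓝 0) := by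
  rcases eq_or_ne β 0 with rfl | hβ
  · have heq : (fun A : ℝ => (1 - (1 - 0^3 * A^3) ^ ((2:ℝ)/3)) / A^2) = fun _ => (0:ℝ) := by
      funext A
      simp [Real.one_rpow]
    rw [heq]
    exact tendsto_const_nhds
  · have hder : HasDerivAt (fun u : ℝ => (1 - u) ^ ((2:ℝ)/3)) (-(2/3)) 0 := by
      have hout : HasDerivAt (fun x : ℝ => x ^ ((2:ℝ)/3)) ((2:ℝ)/3) 1 := by
        have := Real.hasDerivAt_rpow_const (x := (1:ℝ)) (p := (2:ℝ)/3) (Or.inl one_ne_zero)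
        simpa [Real.one_rpow] using this
      have h10 : (1:ℝ) = 1 - 0 := by norm_num
      rw [h10] at hout
      have h := hout.comp (0:ℝ) (aux_hv' 0)
      have h2 : HasDerivAt (fun u : ℝ => (1 - u) ^ ((2:ℝ)/3)) ((2:ℝ)/3 * (-1)) 0 := h
      convert h2 using 1
      norm_num
    have hζ := hasDerivAt_iff_tendsto_slope.mp hder
    have hζ' : Tendsto (fun u : ℝ => ((1 - u) ^ ((2:ℝ)/3) - 1) / u) (𝓝[≠] (0:ℝ))
        (𝓝 (-(2/3))) := by
      apply hζ.congr
      intro u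
      simp [slope_def_field, Real.one_rpow]
    have hcomp : Tendsto (fun A : ℝ => β^3 * A^3) (𝓝[>] (0:ℝ)) (𝓝[≠] (0:ℝ)) := by
      rw [tendsto_nhdsWithin_iff]
      constructor
      · have hc : Continuous (fun A : ℝ => β^3 * A^3) := continuous_const.mul (continuous_pow 3)
        exact (hc.tendsto' 0 0 (by norm_num)).mono_left (nhdsWithin_le_nhds (s := Set.Ioi (0:ℝ)))
      · filter_upwards [self_mem_nhdsWithin] with A hA
        simp only [Set.mem_compl_iff, Set.mem_singleton_iff]
        exact mul_ne_zero (pow_ne_zero _ hβ) (pow_ne_zero _ (ne_of_gt hA))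
    have hlin : Tendsto (fun A : ℝ => -(β^3 * A)) (𝓝[>] (0:ℝ)) (𝓝 0) := by
      have hc : Continuous (fun A : ℝ => -(β^3 * A)) := (continuous_const.mul continuous_id).neg
      exact (hc.tendsto' 0 0 (by norm_num)).mono_left (nhdsWithin_le_nhds (s := Set.Ioi (0:ℝ)))
    have hmul := (hζ'.comp hcomp).mul hlin
    rw [mul_zero] at hmul
    apply hmul.congr'
    filter_upwards [self_mem_nhdsWithin] with A hA
    have hA0 : A ≠ 0 := ne_of_gt hA
    show ((1 - β^3*A^3) ^ ((2:ℝ)/3) - 1) / (β^3*A^3) * -(β^3*A) = (1 - (1 - β^3*A^3) ^ ((2:ℝ)/3)) / A^2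
    field_simp
    ring

theorem stmt_16 (e β : ℝ) (he : e ∈ Set.Ioo (0 : ℝ) 1) (hne : e ≠ 1 / 2)
    (F : ℝ → ℝ → ℝ)
    (hF : ∀ A B, F A B = (binEntropy (e + A + B) + binEntropy (e - A + B) - 2 * binEntropy e
      - 2 * B * deriv binEntropy e) / ((A ^ 3 - B ^ 3) ^ ((2 : ℝ) / 3))) :
    Filter.Tendsto
      (fun A : ℝ => (F A (β * A ^ 2) - iteratedDeriv 2 binEntropy e) / A ^ 2)
      (nhdsWithin 0 (Set.Ioi 0))
      (nhds (iteratedDeriv 2 binEntropy e * β ^ 2 + iteratedDeriv 3 binEntropy e * β +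
        iteratedDeriv 4 binEntropy e / 12)) := by
  rw [aux_d2 e he, aux_d3 e he, aux_d4 e he]
  set l := nhdsWithin (0:ℝ) (Set.Ioi 0) with hl
  set r : ℝ → ℝ := fun h => (binEntropy (e + h) - binEntropy e - (auxg1 e * h + auxg2 e * h^2/2
      + auxg3 e * h^3/6 + auxg4 e * h^4/24)) / h ^ 4 with hrdef
  have hr : Tendsto r (𝓝[≠] (0:ℝ)) (𝓝 0) := aux_expansion he
  have tc : ∀ (f : ℝ → ℝ) (c : ℝ), Continuous f → f 0 = c → Tendsto f l (𝓝 c) :=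
    fun f c hf h0 => (hf.tendsto' 0 c h0).mono_left nhdsWithin_le_nhds
  -- eventual smallness
  have hsmall : ∀ᶠ A in l, 0 < A ∧ |β * A| < 1 ∧ |β^3 * A^3| < 1 := by
    have e1 : ∀ᶠ A in l, 0 < A := eventually_mem_nhdsWithin
    have e2 : ∀ᶠ A in l, |β * A| < 1 := by
      have hc : Continuous (fun A : ℝ => |β * A|) := (continuous_const.mul continuous_id).abs
      exact (tc _ 0 hc (by norm_num)).eventually_lt_const one_pos
    have e3 : ∀ᶠ A in l, |β^3 * A^3| < 1 := by
      have hc : Continuous (fun A : ℝ => |β^3 * A^3|) := (continuous_const.mul (continuous_pow 3)).abs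
      exact (tc _ 0 hc (by norm_num)).eventually_lt_const one_pos
    filter_upwards [e1, e2, e3] with A h1 h2 h3
    exact ⟨h1, h2, h3⟩
  -- the two shifts tend to 0 within the punctured neighborhood
  have huP : Tendsto (fun A : ℝ => A + β * A^2) l (𝓝[≠] (0:ℝ)) := by
    rw [tendsto_nhdsWithin_iff]
    constructor
    · have hc : Continuous (fun A : ℝ => A + β * A^2) :=
        continuous_id.add (continuous_const.mul (continuous_pow 2))
      exact tc _ 0 hc (by norm_num)
    · filter_upwards [hsmall] with A hA
      obtain ⟨h1, h2, _⟩ := hA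
      have hb := (abs_lt.mp h2).1
      have : A + β * A^2 = A * (1 + β * A) := by ring
      simp only [Set.mem_compl_iff, Set.mem_singleton_iff]
      rw [this]
      exact ne_of_gt (mul_pos h1 (by linarith))
  have huM : Tendsto (fun A : ℝ => -A + β * A^2) l (𝓝[≠] (0:ℝ)) := by
    rw [tendsto_nhdsWithin_iff]
    constructor
    · have hc : Continuous (fun A : ℝ => -A + β * A^2) :=
        continuous_id.neg.add (continuous_const.mul (continuous_pow 2))
      exact tc _ 0 hc (by norm_num)
    · filter_upwards [hsmall] with A hA
      obtain ⟨h1, h2, _⟩ := hA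
      have hb := (abs_lt.mp h2).2
      have : -A + β * A^2 = A * (β * A - 1) := by ring
      simp only [Set.mem_compl_iff, Set.mem_singleton_iff]
      rw [this]
      exact ne_of_lt (mul_neg_of_pos_of_neg h1 (by linarith))
  have hRP : Tendsto (fun A : ℝ => r (A + β * A^2)) l (𝓝 0) := hr.comp huP
  have hRM : Tendsto (fun A : ℝ => r (-A + β * A^2)) l (𝓝 0) := hr.comp huM
  -- limits of the elementary pieces
  have hP0 : Tendsto (fun A : ℝ => auxg2 e * β^2 + auxg3 e * β + auxg4 e/12
      + A^2 * (auxg3 e * β^3/3 + auxg4 e * β^2/2) + A^4 * (auxg4 e * β^4/12)) l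
      (𝓝 (auxg2 e * β^2 + auxg3 e * β + auxg4 e/12)) := by
    have hc : Continuous (fun A : ℝ => auxg2 e * β^2 + auxg3 e * β + auxg4 e/12
        + A^2 * (auxg3 e * β^3/3 + auxg4 e * β^2/2) + A^4 * (auxg4 e * β^4/12)) := by
      continuity
    exact tc _ _ hc (by norm_num)
  have hqP : Tendsto (fun A : ℝ => (1 + β * A)^4) l (𝓝 1) := by
    have hc : Continuous (fun A : ℝ => (1 + β * A)^4) :=
      (continuous_const.add (continuous_const.mul continuous_id)).pow 4
    exact tc _ 1 hc (by norm_num)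
  have hqM : Tendsto (fun A : ℝ => (β * A - 1)^4) l (𝓝 1) := by
    have hc : Continuous (fun A : ℝ => (β * A - 1)^4) :=
      ((continuous_const.mul continuous_id).sub continuous_const).pow 4
    exact tc _ 1 hc (by norm_num)
  have hs1 : Tendsto (fun A : ℝ => (1 - β^3 * A^3) ^ ((2:ℝ)/3)) l (𝓝 1) := by
    have hin : Tendsto (fun A : ℝ => 1 - β^3 * A^3) l (𝓝 1) := by
      have hc : Continuous (fun A : ℝ => 1 - β^3 * A^3) :=
        continuous_const.sub (continuous_const.mul (continuous_pow 3))
      exact tc _ 1 hc (by norm_num)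
    have hco := (Real.continuousAt_rpow_const 1 ((2:ℝ)/3) (Or.inl one_ne_zero)).tendsto.comp hin
    simpa [Real.one_rpow, Function.comp_def] using hco
  have hm : Tendsto (fun A : ℝ => ((1 - β^3 * A^3) ^ ((2:ℝ)/3))⁻¹) l (𝓝 1) := by
    simpa using hs1.inv₀ one_ne_zero
  have hκ : Tendsto (fun A : ℝ => (1 - (1 - β^3 * A^3) ^ ((2:ℝ)/3)) / A^2) l (𝓝 0) := aux_kappa β
  -- the combined limit
  have hG := (((hP0.add (hRP.mul hqP)).add (hRM.mul hqM)).mul hm).add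
    ((hκ.mul hm).const_mul (auxg2 e))
  rw [show (auxg2 e * β^2 + auxg3 e * β + auxg4 e/12 + 0 * 1 + 0 * 1) * 1
      + auxg2 e * (0 * 1) = auxg2 e * β^2 + auxg3 e * β + auxg4 e/12 by ring] at hG
  refine hG.congr' ?_
  filter_upwards [hsmall] with A hA
  obtain ⟨h1, h2, h3⟩ := hA
  have hA0 : A ≠ 0 := ne_of_gt h1
  have hw : 0 < 1 - β^3 * A^3 := by
    have := (abs_lt.mp h3).2
    linarith
  have hspos : 0 < (1 - β^3 * A^3) ^ ((2:ℝ)/3) := Real.rpow_pos_of_pos hw _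
  have huPne : A + β * A^2 ≠ 0 := by
    have hb := (abs_lt.mp h2).1
    have heq : A + β * A^2 = A * (1 + β * A) := by ring
    rw [heq]
    exact ne_of_gt (mul_pos h1 (by linarith))
  have huMne : -A + β * A^2 ≠ 0 := by
    have hb := (abs_lt.mp h2).2
    have heq : -A + β * A^2 = A * (β * A - 1) := by ring
    rw [heq]
    exact ne_of_lt (mul_neg_of_pos_of_neg h1 (by linarith))
  -- rewrite the denominator
  have hDeq : (A^3 - (β * A^2)^3) ^ ((2:ℝ)/3) = A^2 * (1 - β^3 * A^3) ^ ((2:ℝ)/3) := by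
    have hsplit : A^3 - (β * A^2)^3 = A^3 * (1 - β^3 * A^3) := by ring
    rw [hsplit, Real.mul_rpow (by positivity) hw.le]
    congr 1
    rw [← Real.rpow_natCast A 3, ← Real.rpow_mul h1.le]
    norm_num
  -- express binEntropy values through the remainder r
  have hbinP : binEntropy (e + A + β * A^2) = binEntropy e
      + (auxg1 e * (A + β * A^2) + auxg2 e * (A + β * A^2)^2/2
        + auxg3 e * (A + β * A^2)^3/6 + auxg4 e * (A + β * A^2)^4/24)
      + r (A + β * A^2) * (A + β * A^2)^4 := by
    have heq : e + A + β * A^2 = e + (A + β * A^2) := by ring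
    rw [heq, hrdef]
    beta_reduce
    rw [div_mul_cancel₀ _ (pow_ne_zero 4 huPne)]
    ring
  have hbinM : binEntropy (e - A + β * A^2) = binEntropy e
      + (auxg1 e * (-A + β * A^2) + auxg2 e * (-A + β * A^2)^2/2
        + auxg3 e * (-A + β * A^2)^3/6 + auxg4 e * (-A + β * A^2)^4/24)
      + r (-A + β * A^2) * (-A + β * A^2)^4 := by
    have heq : e - A + β * A^2 = e + (-A + β * A^2) := by ring
    rw [heq, hrdef]
    beta_reduce
    rw [div_mul_cancel₀ _ (pow_ne_zero 4 huMne)]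
    ring
  rw [hF, aux_d1 e he, hDeq, hbinP, hbinM]
  field_simp
  ring
end

section
/- Let e ∈ (0, (3-√3)/6). Then there exist real numbers A > 0 and B with A³ > B³, 0 < e - A + B and e + A + B < 1, such that F(A,B) > H''(e), where F(A,B) = [H(e+A+B) + H(e-A+B) - 2H(e) - 2B·H'(e)]/(A³-B³)^{2/3}. -/
open Set Filter

private lemma monoAux {f f' : ℝ → ℝ} {p q : ℝ}
    (hd : ∀ x ∈ Icc p q, HasDerivAt f (f' x) x)
    (h0 : ∀ x ∈ Icc p q, 0 ≤ f' x) : MonotoneOn f (Icc p q) := by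
  refine monotoneOn_of_deriv_nonneg (convex_Icc p q)
    (fun x hx => (hd x hx).continuousAt.continuousWithinAt)
    (fun x hx => ((hd x (interior_subset hx)).differentiableAt).differentiableWithinAt)
    (fun x hx => ?_)
  rw [(hd x (interior_subset hx)).deriv]
  exact h0 x (interior_subset hx)

private lemma antiAux {f f' : ℝ → ℝ} {p q : ℝ}
    (hd : ∀ x ∈ Icc p q, HasDerivAt f (f' x) x)
    (h0 : ∀ x ∈ Icc p q, f' x ≤ 0) : AntitoneOn f (Icc p q) := by
  refine antitoneOn_of_deriv_nonpos (convex_Icc p q)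
    (fun x hx => (hd x hx).continuousAt.continuousWithinAt)
    (fun x hx => ((hd x (interior_subset hx)).differentiableAt).differentiableWithinAt)
    (fun x hx => ?_)
  rw [(hd x (interior_subset hx)).deriv]
  exact h0 x (interior_subset hx)

private lemma signAux {f f' : ℝ → ℝ} {p q c : ℝ} (hc : c ∈ Icc p q)
    (hd : ∀ x ∈ Icc p q, HasDerivAt f (f' x) x)
    (h0 : ∀ x ∈ Icc p q, 0 ≤ f' x) (hfc : f c = 0) :
    ∀ x ∈ Icc p q, (c ≤ x → 0 ≤ f x) ∧ (x ≤ c → f x ≤ 0) := by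
  have hm := monoAux hd h0
  intro x hx
  constructor
  · intro h; rw [← hfc]; exact hm hc hx h
  · intro h; rw [← hfc]; exact hm hx hc h

private lemma minAux {f f' : ℝ → ℝ} {p q c : ℝ} (hc : c ∈ Icc p q)
    (hd : ∀ x ∈ Icc p q, HasDerivAt f (f' x) x)
    (hpos : ∀ x ∈ Icc p q, c ≤ x → 0 ≤ f' x)
    (hneg : ∀ x ∈ Icc p q, x ≤ c → f' x ≤ 0) (hfc : f c = 0) :
    ∀ x ∈ Icc p q, 0 ≤ f x := by
  intro x hx
  rcases le_total c x with h | h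
  · have hm : MonotoneOn f (Icc c q) := monoAux
      (fun y hy => hd y ⟨le_trans hc.1 hy.1, hy.2⟩)
      (fun y hy => hpos y ⟨le_trans hc.1 hy.1, hy.2⟩ hy.1)
    have := hm ⟨le_refl c, hc.2⟩ ⟨h, hx.2⟩ h
    rw [hfc] at this; exact this
  · have hm : AntitoneOn f (Icc p c) := antiAux
      (fun y hy => hd y ⟨hy.1, le_trans hy.2 hc.2⟩)
      (fun y hy => hneg y ⟨hy.1, le_trans hy.2 hc.2⟩ hy.2)
    have := hm ⟨hx.1, h⟩ ⟨hc.1, le_refl c⟩ h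
    rw [hfc] at this; exact this

private lemma taylor4 {f0 f1 f2 f3 f4 : ℝ → ℝ} {p q c m : ℝ} (hc : c ∈ Icc p q)
    (h0 : ∀ x ∈ Icc p q, HasDerivAt f0 (f1 x) x)
    (h1 : ∀ x ∈ Icc p q, HasDerivAt f1 (f2 x) x)
    (h2 : ∀ x ∈ Icc p q, HasDerivAt f2 (f3 x) x)
    (h3 : ∀ x ∈ Icc p q, HasDerivAt f3 (f4 x) x)
    (hm : ∀ x ∈ Icc p q, m ≤ f4 x) :
    ∀ x ∈ Icc p q,
      f0 c + f1 c * (x - c) + f2 c * (x - c) ^ 2 / 2 + f3 c * (x - c) ^ 3 / 6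
        + m * (x - c) ^ 4 / 24 ≤ f0 x := by
  have hxc : ∀ x : ℝ, HasDerivAt (fun y : ℝ => y - c) 1 x :=
    fun x => (hasDerivAt_id x).sub_const c
  -- g3
  have hg3d : ∀ x ∈ Icc p q,
      HasDerivAt (fun y => f3 y - f3 c - m * (y - c)) (f4 x - m) x := by
    intro x hx
    have d1 : HasDerivAt (fun y : ℝ => m * (y - c)) m x := by
      simpa using (hxc x).const_mul m
    exact ((h3 x hx).sub_const (f3 c)).sub d1
  have hg3 := signAux hc hg3d (fun x hx => sub_nonneg.2 (hm x hx)) (by simp)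
  -- g2
  have hg2d : ∀ x ∈ Icc p q,
      HasDerivAt (fun y => f2 y - f2 c - f3 c * (y - c) - m * (y - c) ^ 2 / 2)
        (f3 x - f3 c - m * (x - c)) x := by
    intro x hx
    have d1 : HasDerivAt (fun y : ℝ => f3 c * (y - c)) (f3 c) x := by
      simpa using (hxc x).const_mul (f3 c)
    have d2 : HasDerivAt (fun y : ℝ => m * (y - c) ^ 2 / 2) (m * (x - c)) x := by
      have := (((hxc x).pow 2).const_mul m).div_const 2
      exact this.congr_deriv (by ring)
    exact (((h2 x hx).sub_const (f2 c)).sub d1).sub d2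
  have hg2 : ∀ x ∈ Icc p q,
      0 ≤ f2 x - f2 c - f3 c * (x - c) - m * (x - c) ^ 2 / 2 :=
    minAux hc hg2d (fun x hx h => (hg3 x hx).1 h) (fun x hx h => (hg3 x hx).2 h) (by simp)
  -- g1
  have hg1d : ∀ x ∈ Icc p q,
      HasDerivAt
        (fun y => f1 y - f1 c - f2 c * (y - c) - f3 c * (y - c) ^ 2 / 2 - m * (y - c) ^ 3 / 6)
        (f2 x - f2 c - f3 c * (x - c) - m * (x - c) ^ 2 / 2) x := by
    intro x hx
    have d1 : HasDerivAt (fun y : ℝ => f2 c * (y - c)) (f2 c) x := by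
      simpa using (hxc x).const_mul (f2 c)
    have d2 : HasDerivAt (fun y : ℝ => f3 c * (y - c) ^ 2 / 2) (f3 c * (x - c)) x := by
      have := (((hxc x).pow 2).const_mul (f3 c)).div_const 2
      exact this.congr_deriv (by ring)
    have d3 : HasDerivAt (fun y : ℝ => m * (y - c) ^ 3 / 6) (m * (x - c) ^ 2 / 2) x := by
      have := (((hxc x).pow 3).const_mul m).div_const 6
      exact this.congr_deriv (by ring)
    exact ((((h1 x hx).sub_const (f1 c)).sub d1).sub d2).sub d3
  have hg1 := signAux hc hg1d hg2 (by simp)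
  -- g0
  have hg0d : ∀ x ∈ Icc p q,
      HasDerivAt
        (fun y => f0 y - f0 c - f1 c * (y - c) - f2 c * (y - c) ^ 2 / 2
          - f3 c * (y - c) ^ 3 / 6 - m * (y - c) ^ 4 / 24)
        (f1 x - f1 c - f2 c * (x - c) - f3 c * (x - c) ^ 2 / 2 - m * (x - c) ^ 3 / 6) x := by
    intro x hx
    have d1 : HasDerivAt (fun y : ℝ => f1 c * (y - c)) (f1 c) x := by
      simpa using (hxc x).const_mul (f1 c)
    have d2 : HasDerivAt (fun y : ℝ => f2 c * (y - c) ^ 2 / 2) (f2 c * (x - c)) x := by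
      have := (((hxc x).pow 2).const_mul (f2 c)).div_const 2
      exact this.congr_deriv (by ring)
    have d3 : HasDerivAt (fun y : ℝ => f3 c * (y - c) ^ 3 / 6) (f3 c * (x - c) ^ 2 / 2) x := by
      have := (((hxc x).pow 3).const_mul (f3 c)).div_const 6
      exact this.congr_deriv (by ring)
    have d4 : HasDerivAt (fun y : ℝ => m * (y - c) ^ 4 / 24) (m * (x - c) ^ 3 / 6) x := by
      have := (((hxc x).pow 4).const_mul m).div_const 24
      exact this.congr_deriv (by ring)
    exact (((((h0 x hx).sub_const (f0 c)).sub d1).sub d2).sub d3).sub d4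
  have hg0 := minAux hc hg0d (fun x hx h => (hg1 x hx).1 h) (fun x hx h => (hg1 x hx).2 h)
    (by simp)
  intro x hx
  have := hg0 x hx
  linarith

private lemma bE_hasDeriv {u : ℝ} (h0 : 0 < u) (h1 : u < 1) :
    HasDerivAt binEntropy (Real.log (1 - u) - Real.log u) u := by
  have h1u : (0:ℝ) < 1 - u := by linarith
  have inner : HasDerivAt (fun x : ℝ => 1 - x) (-1) u := by
    simpa using (hasDerivAt_id u).const_sub 1
  have t1 : HasDerivAt (fun x : ℝ => x * Real.log x) (Real.log u + 1) u :=
    Real.hasDerivAt_mul_log h0.ne'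
  have t2 : HasDerivAt (fun x : ℝ => (1 - x) * Real.log (1 - x))
      ((Real.log (1 - u) + 1) * (-1)) u :=
    (Real.hasDerivAt_mul_log h1u.ne').comp u inner
  show HasDerivAt (fun x : ℝ => -(x * Real.log x + (1 - x) * Real.log (1 - x)))
    (Real.log (1 - u) - Real.log u) u
  have := (t1.add t2).neg
  exact this.congr_deriv (by ring)

private lemma h1_hasDeriv {u : ℝ} (h0 : 0 < u) (h1 : u < 1) :
    HasDerivAt (fun x : ℝ => Real.log (1 - x) - Real.log x) (-u⁻¹ - (1 - u)⁻¹) u := by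
  have h1u : (0:ℝ) < 1 - u := by linarith
  have inner : HasDerivAt (fun x : ℝ => 1 - x) (-1) u := by
    simpa using (hasDerivAt_id u).const_sub 1
  have t1 : HasDerivAt (fun x : ℝ => Real.log (1 - x)) ((1 - u)⁻¹ * (-1)) u :=
    (Real.hasDerivAt_log h1u.ne').comp u inner
  have := t1.sub (Real.hasDerivAt_log h0.ne')
  exact this.congr_deriv (by ring)

private lemma h2_hasDeriv {u : ℝ} (h0 : 0 < u) (h1 : u < 1) :
    HasDerivAt (fun x : ℝ => -x⁻¹ - (1 - x)⁻¹) ((u ^ 2)⁻¹ - ((1 - u) ^ 2)⁻¹) u := by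
  have h1u : (0:ℝ) < 1 - u := by linarith
  have inner : HasDerivAt (fun x : ℝ => 1 - x) (-1) u := by
    simpa using (hasDerivAt_id u).const_sub 1
  have t1 : HasDerivAt (fun x : ℝ => x⁻¹) (-(u ^ 2)⁻¹) u := hasDerivAt_inv h0.ne'
  have t2 : HasDerivAt (fun x : ℝ => (1 - x)⁻¹) (-(-1) / (1 - u) ^ 2) u :=
    inner.inv h1u.ne'
  have := t1.neg.sub t2
  refine this.congr_deriv ?_
  field_simp

private lemma h3_hasDeriv {u : ℝ} (h0 : 0 < u) (h1 : u < 1) :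
    HasDerivAt (fun x : ℝ => (x ^ 2)⁻¹ - ((1 - x) ^ 2)⁻¹)
      (-2 * (u ^ 3)⁻¹ - 2 * ((1 - u) ^ 3)⁻¹) u := by
  have h1u : (0:ℝ) < 1 - u := by linarith
  have inner : HasDerivAt (fun x : ℝ => 1 - x) (-1) u := by
    simpa using (hasDerivAt_id u).const_sub 1
  have p1 : HasDerivAt (fun x : ℝ => x ^ 2) ((2:ℕ) * u ^ 1 * 1) u := (hasDerivAt_id u).pow 2
  have t1 := p1.inv (pow_ne_zero 2 h0.ne')
  have p2 : HasDerivAt (fun x : ℝ => (1 - x) ^ 2) ((2:ℕ) * (1 - u) ^ 1 * (-1)) u := inner.pow 2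
  have t2 := p2.inv (pow_ne_zero 2 h1u.ne')
  have := t1.sub t2
  refine this.congr_deriv ?_
  field_simp [h0.ne', h1u.ne']
  ring

theorem stmt_17 (e : ℝ) (he : e ∈ Set.Ioo (0 : ℝ) ((3 - Real.sqrt 3) / 6)) :
    ∃ A B : ℝ, 0 < A ∧ B ^ 3 < A ^ 3 ∧ 0 < e - A + B ∧ e + A + B < 1 ∧
      (binEntropy (e + A + B) + binEntropy (e - A + B) - 2 * binEntropy e
          - 2 * B * deriv binEntropy e) / ((A ^ 3 - B ^ 3) ^ ((2 : ℝ) / 3)) >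
        iteratedDeriv 2 binEntropy e := by
  obtain ⟨he0, heU⟩ := he
  have hs3 : (Real.sqrt 3) ^ 2 = 3 := Real.sq_sqrt (by norm_num)
  have hs1 : 1 ≤ Real.sqrt 3 := by nlinarith [Real.sqrt_nonneg 3]
  have he2 : e < 1 / 2 := by nlinarith
  have h1e : e < 1 := by linarith
  have hv : (0:ℝ) < 1 - e := by linarith
  have hkey : 0 < 6 * e ^ 2 - 6 * e + 1 := by
    have p1 : 0 < (3 - Real.sqrt 3) / 6 - e := by linarith
    have p2 : 0 < (3 + Real.sqrt 3) / 6 - e := by nlinarith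
    nlinarith [mul_pos p1 p2]
  obtain ⟨H2, hH2def⟩ : ∃ x : ℝ, x = -e⁻¹ - (1 - e)⁻¹ := ⟨_, rfl⟩
  obtain ⟨H3, hH3def⟩ : ∃ x : ℝ, x = (e ^ 2)⁻¹ - ((1 - e) ^ 2)⁻¹ := ⟨_, rfl⟩
  obtain ⟨H4, hH4def⟩ : ∃ x : ℝ, x = -2 * (e ^ 3)⁻¹ - 2 * ((1 - e) ^ 3)⁻¹ := ⟨_, rfl⟩
  have hH2 : H2 < 0 := by
    rw [hH2def]
    have := inv_pos.2 he0
    have := inv_pos.2 hv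
    linarith
  have hH3 : 0 < H3 := by
    rw [hH3def]
    have h1 : e ^ 2 < (1 - e) ^ 2 := by nlinarith
    have := inv_strictAnti₀ (pow_pos he0 2) h1
    linarith
  have hdiff : 0 < 3 * H3 ^ 2 - H2 * H4 := by
    have hq : 3 * H3 ^ 2 - H2 * H4 = (6 * e ^ 2 - 6 * e + 1) / (e ^ 4 * (1 - e) ^ 4) := by
      rw [hH2def, hH3def, hH4def]
      field_simp
      ring
    rw [hq]
    exact div_pos hkey (mul_pos (pow_pos he0 4) (pow_pos hv 4))
  obtain ⟨β, hβdef⟩ : ∃ x : ℝ, x = H3 / (-(2 * H2)) := ⟨_, rfl⟩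
  have hβ : 0 < β := by rw [hβdef]; exact div_pos hH3 (by linarith)
  obtain ⟨ε, hεdef⟩ : ∃ x : ℝ, x = (3 * H3 ^ 2 - H2 * H4) / (-(24 * H2)) := ⟨_, rfl⟩
  have hε : 0 < ε := by rw [hεdef]; exact div_pos hdiff (by linarith)
  obtain ⟨m, hmdef⟩ : ∃ x : ℝ, x = H4 - 12 * ε := ⟨_, rfl⟩
  have h2ne : H2 ≠ 0 := hH2.ne
  have hKid : H2 * β ^ 2 + H3 * β + m / 12 = ε := by
    rw [hmdef, hβdef, hεdef]
    field_simp
    ring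
  -- choose δ via continuity of the 4th derivative
  have hcont : ContinuousAt (fun x : ℝ => -2 * (x ^ 3)⁻¹ - 2 * ((1 - x) ^ 3)⁻¹) e := by
    have c1 : ContinuousAt (fun x : ℝ => (x ^ 3)⁻¹) e :=
      ((continuous_pow 3).continuousAt).inv₀ (pow_ne_zero _ he0.ne')
    have c2 : ContinuousAt (fun x : ℝ => ((1 - x) ^ 3)⁻¹) e :=
      (((continuous_const.sub continuous_id).pow 3).continuousAt).inv₀ (pow_ne_zero _ hv.ne')
    exact (c1.const_mul (-2)).sub (c2.const_mul 2)
  have hmlt : m < -2 * (e ^ 3)⁻¹ - 2 * ((1 - e) ^ 3)⁻¹ := by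
    rw [hmdef, ← hH4def]; linarith
  have hev1 : ∀ᶠ x in nhds e, m < -2 * (x ^ 3)⁻¹ - 2 * ((1 - x) ^ 3)⁻¹ :=
    hcont.eventually (eventually_gt_nhds hmlt)
  have hev2 : ∀ᶠ x in nhds e, 0 < x ∧ x < 1 := by
    filter_upwards [isOpen_Ioo.mem_nhds (show e ∈ Ioo (0:ℝ) 1 from ⟨he0, h1e⟩)] with x hx
    exact ⟨hx.1, hx.2⟩
  obtain ⟨δ, hδ0, hδ⟩ := Metric.eventually_nhds_iff.1 (hev1.and hev2)
  have hsub : ∀ x ∈ Icc (e - δ / 2) (e + δ / 2),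
      (m ≤ -2 * (x ^ 3)⁻¹ - 2 * ((1 - x) ^ 3)⁻¹) ∧ 0 < x ∧ x < 1 := by
    intro x hx
    have hd : dist x e < δ := by
      rw [Real.dist_eq, abs_lt]
      constructor <;> [linarith [hx.1]; linarith [hx.2]]
    exact ⟨(hδ hd).1.le, (hδ hd).2⟩
  have hce : e ∈ Icc (e - δ / 2) (e + δ / 2) := ⟨by linarith, by linarith⟩
  -- derivative chains on the interval
  have hd0 : ∀ x ∈ Icc (e - δ / 2) (e + δ / 2),
      HasDerivAt binEntropy ((fun x : ℝ => Real.log (1 - x) - Real.log x) x) x :=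
    fun x hx => bE_hasDeriv (hsub x hx).2.1 (hsub x hx).2.2
  have hd1 : ∀ x ∈ Icc (e - δ / 2) (e + δ / 2),
      HasDerivAt (fun x : ℝ => Real.log (1 - x) - Real.log x)
        ((fun x : ℝ => -x⁻¹ - (1 - x)⁻¹) x) x :=
    fun x hx => h1_hasDeriv (hsub x hx).2.1 (hsub x hx).2.2
  have hd2 : ∀ x ∈ Icc (e - δ / 2) (e + δ / 2),
      HasDerivAt (fun x : ℝ => -x⁻¹ - (1 - x)⁻¹)
        ((fun x : ℝ => (x ^ 2)⁻¹ - ((1 - x) ^ 2)⁻¹) x) x :=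
    fun x hx => h2_hasDeriv (hsub x hx).2.1 (hsub x hx).2.2
  have hd3 : ∀ x ∈ Icc (e - δ / 2) (e + δ / 2),
      HasDerivAt (fun x : ℝ => (x ^ 2)⁻¹ - ((1 - x) ^ 2)⁻¹)
        ((fun x : ℝ => -2 * (x ^ 3)⁻¹ - 2 * ((1 - x) ^ 3)⁻¹) x) x :=
    fun x hx => h3_hasDeriv (hsub x hx).2.1 (hsub x hx).2.2
  have hT := taylor4 hce hd0 hd1 hd2 hd3 (fun x hx => (hsub x hx).1)
  -- choose A
  obtain ⟨c6, hc6def⟩ : ∃ x : ℝ, x = H3 * β ^ 3 / 3 + m * β ^ 2 / 2 := ⟨_, rfl⟩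
  obtain ⟨c8, hc8def⟩ : ∃ x : ℝ, x = m * β ^ 4 / 12 := ⟨_, rfl⟩
  obtain ⟨c, hcdef⟩ : ∃ x : ℝ, x = (-H2) * β ^ 3 + |c6| + |c8| := ⟨_, rfl⟩
  have hc0 : 0 < c + 1 := by
    have h1 : 0 < (-H2) * β ^ 3 := mul_pos (by linarith) (pow_pos hβ 3)
    have := abs_nonneg c6
    have := abs_nonneg c8
    rw [hcdef]; linarith
  obtain ⟨A, hAdef⟩ : ∃ x : ℝ, x = min 1 (min (1 / (2 * β + 1)) (min (δ / 4) (ε / (c + 1)))) :=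
    ⟨_, rfl⟩
  have hA0 : 0 < A := by
    rw [hAdef]
    exact lt_min one_pos (lt_min (div_pos one_pos (by linarith))
      (lt_min (by linarith) (div_pos hε hc0)))
  have hA1 : A ≤ 1 := by rw [hAdef]; exact min_le_left _ _
  have hA2 : A ≤ 1 / (2 * β + 1) := by
    rw [hAdef]; exact le_trans (min_le_right _ _) (min_le_left _ _)
  have hA3 : A ≤ δ / 4 := by
    rw [hAdef]; exact le_trans (min_le_right _ _) (le_trans (min_le_right _ _) (min_le_left _ _))
  have hA4 : A ≤ ε / (c + 1) := by
    rw [hAdef]; exact le_trans (min_le_right _ _) (le_trans (min_le_right _ _) (min_le_right _ _))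
  have hβA : β * A ≤ 1 / 2 := by
    rw [le_div_iff₀ (by linarith : (0:ℝ) < 2 * β + 1)] at hA2
    linarith only [hA0, hA2]
  have hAc : A * c < ε := by
    rw [le_div_iff₀ hc0] at hA4
    linarith only [hA0, hA4]
  obtain ⟨B, hBdef⟩ : ∃ x : ℝ, x = β * A ^ 2 := ⟨_, rfl⟩
  have hB0 : 0 < B := by rw [hBdef]; exact mul_pos hβ (pow_pos hA0 2)
  have hBA : B ≤ A / 2 := by
    rw [hBdef]
    linarith only [mul_le_mul_of_nonneg_right hβA hA0.le]
  have hB3 : B ^ 3 < A ^ 3 := by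
    apply pow_lt_pow_left₀ (by linarith only [hBA, hA0]) hB0.le
    norm_num
  have hx1 : e + A + B ∈ Icc (e - δ / 2) (e + δ / 2) :=
    ⟨by linarith only [hA0, hB0, hδ0], by linarith only [hA3, hBA, hA0]⟩
  have hx2 : e + (B - A) ∈ Icc (e - δ / 2) (e + δ / 2) :=
    ⟨by linarith only [hB0, hA3, hδ0], by linarith only [hBA, hA0, hδ0]⟩
  have hABpos : 0 < A ^ 3 - B ^ 3 := by linarith only [hB3]
  have hD : 0 < (A ^ 3 - B ^ 3) ^ ((2:ℝ) / 3) := Real.rpow_pos_of_pos hABpos _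
  -- Taylor bounds at the two points
  have T1 := hT (e + A + B) hx1
  have T2 := hT (e + (B - A)) hx2
  rw [show e + A + B - e = A + B by ring, ← hH2def, ← hH3def] at T1
  rw [show e + (B - A) - e = B - A by ring, ← hH2def, ← hH3def] at T2
  -- bound the denominator term
  have hβA3a : 0 ≤ β ^ 3 * A ^ 3 := mul_nonneg (pow_nonneg hβ.le 3) (pow_nonneg hA0.le 3)
  have hβA3b : β ^ 3 * A ^ 3 ≤ 1 / 8 := by
    have := pow_le_pow_left₀ (mul_nonneg hβ.le hA0.le) hβA 3
    linarith only [this]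
  have hLHSnn : 0 ≤ A ^ 2 - β ^ 3 * A ^ 5 := by
    linarith only [mul_le_mul_of_nonneg_left hβA3b (pow_nonneg hA0.le 2), pow_nonneg hA0.le 2]
  have hDge : A ^ 2 - β ^ 3 * A ^ 5 ≤ (A ^ 3 - B ^ 3) ^ ((2:ℝ) / 3) := by
    have hcube3 : ((A ^ 3 - B ^ 3) ^ ((2:ℝ) / 3)) ^ (3:ℕ) = (A ^ 3 - B ^ 3) ^ 2 := by
      rw [← Real.rpow_natCast ((A ^ 3 - B ^ 3) ^ ((2:ℝ) / 3)) 3,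
        ← Real.rpow_mul hABpos.le]
      norm_num
    have h1t : (1 - β ^ 3 * A ^ 3) ^ 3 ≤ (1 - β ^ 3 * A ^ 3) ^ 2 :=
      pow_le_pow_of_le_one (by linarith only [hβA3b]) (by linarith only [hβA3a]) (by norm_num)
    have hcube : (A ^ 2 - β ^ 3 * A ^ 5) ^ 3 ≤ ((A ^ 3 - B ^ 3) ^ ((2:ℝ) / 3)) ^ (3:ℕ) := by
      rw [hcube3]
      calc (A ^ 2 - β ^ 3 * A ^ 5) ^ 3 = A ^ 6 * (1 - β ^ 3 * A ^ 3) ^ 3 := by ring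
        _ ≤ A ^ 6 * (1 - β ^ 3 * A ^ 3) ^ 2 :=
            mul_le_mul_of_nonneg_left h1t (pow_nonneg hA0.le 6)
        _ = (A ^ 3 - B ^ 3) ^ 2 := by rw [hBdef]; ring
    exact (pow_le_pow_iff_left₀ hLHSnn hD.le (by norm_num)).1 hcube
  have hDbound : H2 * ((A ^ 3 - B ^ 3) ^ ((2:ℝ) / 3)) ≤ H2 * (A ^ 2 - β ^ 3 * A ^ 5) :=
    mul_le_mul_of_nonpos_left hDge hH2.le
  -- the key polynomial inequality
  have hPeq : H2 * (A + B) ^ 2 / 2 + H2 * (B - A) ^ 2 / 2 + H3 * (A + B) ^ 3 / 6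
      + H3 * (B - A) ^ 3 / 6 + m * (A + B) ^ 4 / 24 + m * (B - A) ^ 4 / 24
      = H2 * A ^ 2 + A ^ 4 * (H2 * β ^ 2 + H3 * β + m / 12) + A ^ 6 * c6 + A ^ 8 * c8 := by
    rw [hBdef, hc6def, hc8def]; ring
  rw [hKid] at hPeq
  have p65 : A ^ 6 ≤ A ^ 5 := pow_le_pow_of_le_one hA0.le hA1 (by norm_num)
  have p85 : A ^ 8 ≤ A ^ 5 := pow_le_pow_of_le_one hA0.le hA1 (by norm_num)
  have k1 : -(A ^ 5 * |c6|) ≤ A ^ 6 * c6 := by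
    have h1 : A ^ 6 * (-|c6|) ≤ A ^ 6 * c6 :=
      mul_le_mul_of_nonneg_left (neg_abs_le c6) (pow_nonneg hA0.le 6)
    have h2 : A ^ 6 * |c6| ≤ A ^ 5 * |c6| := mul_le_mul_of_nonneg_right p65 (abs_nonneg _)
    linarith only [h1, h2]
  have k2 : -(A ^ 5 * |c8|) ≤ A ^ 8 * c8 := by
    have h1 : A ^ 8 * (-|c8|) ≤ A ^ 8 * c8 :=
      mul_le_mul_of_nonneg_left (neg_abs_le c8) (pow_nonneg hA0.le 8)
    have h2 : A ^ 8 * |c8| ≤ A ^ 5 * |c8| := mul_le_mul_of_nonneg_right p85 (abs_nonneg _)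
    linarith only [h1, h2]
  have k3 : A ^ 4 * (A * c) < A ^ 4 * ε := mul_lt_mul_of_pos_left hAc (pow_pos hA0 4)
  have k4 : A ^ 5 * ((-H2) * β ^ 3) + A ^ 5 * |c6| + A ^ 5 * |c8| = A ^ 4 * (A * c) := by
    rw [hcdef]; ring
  have hMid : H2 * (A ^ 2 - β ^ 3 * A ^ 5)
      < H2 * A ^ 2 + A ^ 4 * ε + A ^ 6 * c6 + A ^ 8 * c8 := by linarith only [k1, k2, k3, k4]
  -- derivative identities at e
  have hL : deriv binEntropy e = Real.log (1 - e) - Real.log e := (bE_hasDeriv he0 h1e).deriv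
  have hEq : deriv binEntropy =ᶠ[nhds e] fun x : ℝ => Real.log (1 - x) - Real.log x := by
    filter_upwards [isOpen_Ioo.mem_nhds (show e ∈ Ioo (0:ℝ) 1 from ⟨he0, h1e⟩)] with x hx
    exact (bE_hasDeriv hx.1 hx.2).deriv
  have hit : iteratedDeriv 2 binEntropy e = H2 := by
    rw [show (2:ℕ) = 1 + 1 from rfl, iteratedDeriv_succ, iteratedDeriv_one, hEq.deriv_eq,
      (h1_hasDeriv he0 h1e).deriv, hH2def]
  refine ⟨A, B, hA0, hB3, ?_, ?_, ?_⟩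
  · have := (hsub _ hx2).2.1
    linarith only [this]
  · have := (hsub _ hx1).2.2
    linarith only [this]
  · rw [gt_iff_lt, hit, hL, lt_div_iff₀ hD]
    have hN : binEntropy (e - A + B) = binEntropy (e + (B - A)) := by ring_nf
    rw [hN]
    calc H2 * ((A ^ 3 - B ^ 3) ^ ((2:ℝ) / 3))
        ≤ H2 * (A ^ 2 - β ^ 3 * A ^ 5) := hDbound
      _ < H2 * A ^ 2 + A ^ 4 * ε + A ^ 6 * c6 + A ^ 8 * c8 := hMid
      _ = H2 * (A + B) ^ 2 / 2 + H2 * (B - A) ^ 2 / 2 + H3 * (A + B) ^ 3 / 6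
          + H3 * (B - A) ^ 3 / 6 + m * (A + B) ^ 4 / 24 + m * (B - A) ^ 4 / 24 := hPeq.symm
      _ ≤ binEntropy (e + A + B) + binEntropy (e + (B - A)) - 2 * binEntropy e
          - 2 * B * (Real.log (1 - e) - Real.log e) := by linarith only [T1, T2]
end
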